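/- arXiv:2301.01339 — 7 statements merged into one kernel-verified Lean document; each statement's English description precedes it below -/
import Mathlib

section
/- Let n ≥ 1, M > 0, η > 0, x ∈ ℝⁿ with ‖x‖₂ ≤ M, and W ∈ ℝ^{n×n}. Then ‖W + η G(xxᵀ, W)‖_F² ≤ (1 + 2M²η)‖W‖_F² + η² ( M⁴‖W‖_F² + (n+3) M⁴ ‖W‖_F⁶ ). -/
open Matrix

/-- `Σ(Λ,Q)`: entrywise, `(QᵀΛQ)_{jk}` for `j > k`, `−(QᵀΛQ)_{jk}` for `j < k`, `0` on the
diagonal. -/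
noncomputable def sigmaMat {n : ℕ} (Λ Q : Matrix (Fin n) (Fin n) ℝ) :
    Matrix (Fin n) (Fin n) ℝ :=
  Matrix.of fun j k =>
    if (k : ℕ) < (j : ℕ) then (Qᵀ * Λ * Q) j k
    else if (j : ℕ) < (k : ℕ) then -((Qᵀ * Λ * Q) j k)
    else 0

/-- Frobenius norm of a matrix. -/
noncomputable def frobNorm {n : ℕ} (A : Matrix (Fin n) (Fin n) ℝ) : ℝ :=
  Real.sqrt (∑ i, ∑ j, (A i j) ^ 2)

/-- Euclidean (`ℓ²`) norm on `ℝⁿ`. -/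
noncomputable def euclNorm {n : ℕ} (x : Fin n → ℝ) : ℝ :=
  Real.sqrt (∑ i, (x i) ^ 2)

/-- The rank-one matrix `xxᵀ`. -/
def outer {n : ℕ} (x : Fin n → ℝ) : Matrix (Fin n) (Fin n) ℝ :=
  Matrix.of fun i j => x i * x j

/-- `G(Λ,Q) := ΛQ − QQᵀΛQ + QΣ(Λ,Q)`. -/
noncomputable def Gmat {n : ℕ} (Λ Q : Matrix (Fin n) (Fin n) ℝ) :
    Matrix (Fin n) (Fin n) ℝ :=
  Λ * Q - Q * Qᵀ * Λ * Q + Q * sigmaMat Λ Q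


private lemma sum3_reorder' {n : ℕ} (T : Fin n → Fin n → Fin n → ℝ) :
    ∑ i, ∑ j, ∑ a, T i j a = ∑ a, ∑ j, ∑ i, T i j a :=
  calc ∑ i, ∑ j, ∑ a, T i j a
      = ∑ j, ∑ i, ∑ a, T i j a := Finset.sum_comm
    _ = ∑ j, ∑ a, ∑ i, T i j a := Finset.sum_congr rfl fun _ _ => Finset.sum_comm
    _ = ∑ a, ∑ j, ∑ i, T i j a := Finset.sum_comm

private lemma sum_add_sq_expand' {n : ℕ} (f h : Fin n → Fin n → ℝ) :
    ∑ i, ∑ j, (f i j + h i j)^2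
      = (∑ i, ∑ j, f i j ^2) + 2 * (∑ i, ∑ j, f i j * h i j) + ∑ i, ∑ j, h i j^2 := by
  simp_rw [add_sq, mul_assoc, Finset.sum_add_distrib, Finset.mul_sum]

private lemma two_mul_sum_symm' {n : ℕ} (f g : Fin n → Fin n → ℝ)
    (hsym : ∀ a j, f a j = f j a) :
    2 * (∑ a, ∑ j, f a j * g a j) = ∑ a, ∑ j, f a j * (g a j + g j a) := by
  have h1 : ∑ a, ∑ j, f a j * g j a = ∑ a, ∑ j, f a j * g a j := by
    rw [Finset.sum_comm]
    exact Finset.sum_congr rfl fun a _ => Finset.sum_congr rfl fun j _ => by rw [hsym]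
  simp_rw [mul_add, Finset.sum_add_distrib, h1]; ring

private lemma aux_IWWB {n : ℕ} (W B : Matrix (Fin n) (Fin n) ℝ) (v : Fin n → ℝ)
    (hBadd : ∀ p q, B p q + B q p = -(2 * (v p * v q))) :
    ∑ i, ∑ j, W i j * (W * B) i j ≤ 0 := by
  have e1 : ∑ i, ∑ j, W i j * (W * B) i j = ∑ a, ∑ j, (∑ i, W i a * W i j) * B a j := by
    simp_rw [Matrix.mul_apply, Finset.mul_sum, Finset.sum_mul]
    rw [sum3_reorder']
    exact Finset.sum_congr rfl fun a _ => Finset.sum_congr rfl fun j _ =>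
      Finset.sum_congr rfl fun i _ => by ring
  have hCsym : ∀ a j, (∑ i, W i a * W i j) = (∑ i, W i j * W i a) :=
    fun a j => Finset.sum_congr rfl fun i _ => by ring
  have e2 : 2 * (∑ a, ∑ j, (∑ i, W i a * W i j) * B a j)
      = ∑ a, ∑ j, (∑ i, W i a * W i j) * (B a j + B j a) := two_mul_sum_symm' _ _ hCsym
  have e3 : ∑ a, ∑ j, (∑ i, W i a * W i j) * (B a j + B j a)
      = -2 * ∑ a, ∑ j, (∑ i, W i a * W i j) * (v a * v j) := by
    simp_rw [hBadd, Finset.mul_sum]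
    exact Finset.sum_congr rfl fun a _ => Finset.sum_congr rfl fun j _ => by ring
  have e4 : ∑ a, ∑ j, (∑ i, W i a * W i j) * (v a * v j)
      = ∑ i, (∑ a, W i a * v a)^2 := by
    simp_rw [Finset.sum_mul, sq, Fintype.sum_mul_sum]
    rw [sum3_reorder']
    exact Finset.sum_congr rfl fun i _ => Finset.sum_congr rfl fun a _ =>
      Finset.sum_congr rfl fun j _ => by ring
  have e5 : 0 ≤ ∑ i, (∑ a, W i a * v a)^2 := by positivity
  rw [e1]; linarith [e2, e3, e4 ▸ e5]

private lemma aux_IXWB {n : ℕ} (W B : Matrix (Fin n) (Fin n) ℝ) (x v : Fin n → ℝ)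
    (hv : ∀ a, v a = ∑ i, x i * W i a)
    (hBadd : ∀ p q, B p q + B q p = -(2 * (v p * v q))) :
    ∑ i, ∑ j, (x i * v j) * (W * B) i j ≤ 0 := by
  have e1 : ∑ i, ∑ j, (x i * v j) * (W * B) i j = ∑ a, ∑ j, (v a * v j) * B a j := by
    simp_rw [Matrix.mul_apply, Finset.mul_sum]
    rw [sum3_reorder']
    refine Finset.sum_congr rfl fun a _ => Finset.sum_congr rfl fun j _ => ?_
    rw [hv a, Finset.sum_mul, Finset.sum_mul]
    exact Finset.sum_congr rfl fun i _ => by ring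
  have e2 : 2 * (∑ a, ∑ j, (v a * v j) * B a j)
      = ∑ a, ∑ j, (v a * v j) * (B a j + B j a) :=
    two_mul_sum_symm' _ _ fun a j => by ring
  have e3 : ∑ a, ∑ j, (v a * v j) * (B a j + B j a)
      = -2 * ∑ a, ∑ j, (v a * v j)^2 := by
    simp_rw [hBadd, Finset.mul_sum]
    exact Finset.sum_congr rfl fun a _ => Finset.sum_congr rfl fun j _ => by ring
  have e5 : 0 ≤ ∑ a, ∑ j, (v a * v j)^2 := by positivity
  rw [e1]; linarith [e2, e3, e5]

private lemma aux_Bn {n : ℕ} (B : Matrix (Fin n) (Fin n) ℝ) (v : Fin n → ℝ)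
    (hBsq : ∀ p q, B p q ^2 + B q p ^2 ≤ 4 * (v p ^2 * v q ^2)) :
    ∑ a, ∑ j, (B a j)^2 ≤ 2 * (∑ j, v j ^2)^2 := by
  have hsw : ∑ a, ∑ j, (B j a)^2 = ∑ a, ∑ j, (B a j)^2 := Finset.sum_comm
  have h1 : ∑ a, ∑ j, ((B a j)^2 + (B j a)^2) ≤ ∑ a, ∑ j, 4 * (v a ^2 * v j ^2) :=
    Finset.sum_le_sum fun a _ => Finset.sum_le_sum fun j _ => hBsq a j
  have h2 : ∑ a, ∑ j, ((B a j)^2 + (B j a)^2)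
      = (∑ a, ∑ j, (B a j)^2) + ∑ a, ∑ j, (B j a)^2 := by
    simp_rw [Finset.sum_add_distrib]
  have h3 : ∑ a, ∑ j, 4 * (v a ^2 * v j ^2) = 4 * (∑ j, v j ^2)^2 := by
    rw [sq, Fintype.sum_mul_sum, Finset.mul_sum]
    exact Finset.sum_congr rfl fun a _ => (Finset.mul_sum _ _ _).symm
  linarith [h1, h2 ▸ h1, hsw]

private lemma aux_WB2 {n : ℕ} (W B : Matrix (Fin n) (Fin n) ℝ) :
    ∑ i, ∑ j, ((W * B) i j)^2 ≤ (∑ i, ∑ j, W i j ^2) * (∑ a, ∑ j, (B a j)^2) := by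
  have key : ∀ i j, ((W * B) i j)^2 ≤ (∑ a, W i a ^2) * (∑ a, B a j ^2) := fun i j => by
    rw [Matrix.mul_apply]; exact Finset.sum_mul_sq_le_sq_mul_sq _ _ _
  calc ∑ i, ∑ j, ((W * B) i j)^2
      ≤ ∑ i, ∑ j, (∑ a, W i a ^2) * (∑ a, B a j ^2) :=
        Finset.sum_le_sum fun i _ => Finset.sum_le_sum fun j _ => key i j
    _ = (∑ i, ∑ a, W i a ^2) * (∑ j, ∑ a, B a j ^2) := by rw [Fintype.sum_mul_sum]
    _ = (∑ i, ∑ j, W i j ^2) * (∑ a, ∑ j, (B a j)^2) := by congr 1; exact Finset.sum_comm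

private lemma aux_CS {n : ℕ} (x v : Fin n → ℝ) (W : Matrix (Fin n) (Fin n) ℝ)
    (hv : ∀ a, v a = ∑ i, x i * W i a) :
    ∑ j, v j ^2 ≤ (∑ i, x i ^2) * (∑ i, ∑ j, W i j ^2) := by
  have key : ∀ j, v j ^2 ≤ (∑ i, x i ^2) * (∑ i, W i j ^2) := fun j => by
    rw [hv]; exact Finset.sum_mul_sq_le_sq_mul_sq _ _ _
  calc ∑ j, v j ^2 ≤ ∑ j, (∑ i, x i ^2) * (∑ i, W i j ^2) := Finset.sum_le_sum fun j _ => key j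
    _ = (∑ i, x i ^2) * (∑ j, ∑ i, W i j ^2) := (Finset.mul_sum _ _ _).symm
    _ = (∑ i, x i ^2) * (∑ i, ∑ j, W i j ^2) := by congr 1; exact Finset.sum_comm

private lemma aux_A1 {n : ℕ} (x v : Fin n → ℝ) (W : Matrix (Fin n) (Fin n) ℝ)
    (hv : ∀ a, v a = ∑ i, x i * W i a) :
    ∑ i, ∑ j, W i j * (x i * v j) = ∑ j, v j ^2 := by
  rw [Finset.sum_comm]
  refine Finset.sum_congr rfl fun j _ => ?_
  have : ∑ i, W i j * (x i * v j) = (∑ i, x i * W i j) * v j := by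
    rw [Finset.sum_mul]
    exact Finset.sum_congr rfl fun i _ => by ring
  rw [this, ← hv j, sq]

private lemma aux_A3 {n : ℕ} (x v : Fin n → ℝ) :
    ∑ i, ∑ j, (x i * v j)^2 = (∑ i, x i ^2) * (∑ j, v j ^2) := by
  rw [Fintype.sum_mul_sum]
  exact Finset.sum_congr rfl fun i _ => Finset.sum_congr rfl fun j _ => by ring

private lemma aux_final (M η P al X2 GG IWG nn : ℝ)
    (hM : 0 < M) (hη : 0 < η) (hPnn : 0 ≤ P) (halnn : 0 ≤ al)
    (hX2M : X2 ≤ M^2) (hal : al ≤ M^2 * P) (hIWG : IWG ≤ al)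
    (hGG : GG ≤ X2 * al + P * (2 * al^2)) (hn3 : 4 ≤ nn) :
    P + 2 * η * IWG + η^2 * GG ≤
      (1 + 2 * M^2 * η) * P + η^2 * (M^4 * P + nn * M^4 * P^3) := by
  have h1 : IWG ≤ M^2 * P := le_trans hIWG hal
  have h2 : X2 * al ≤ M^2 * (M^2 * P) :=
    mul_le_mul hX2M hal halnn (sq_nonneg M)
  have h3 : al^2 ≤ (M^2 * P)^2 := by nlinarith
  have h4 : P * (2 * al^2) ≤ P * (2 * (M^2 * P)^2) := by nlinarith
  have hMP : (0:ℝ) ≤ M^4 * P^3 := by positivity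
  have hGG2 : GG ≤ M^4 * P + nn * M^4 * P^3 := by nlinarith
  have ha : 2 * η * IWG ≤ 2 * η * (M^2 * P) :=
    mul_le_mul_of_nonneg_left h1 (by positivity)
  have hb : η^2 * GG ≤ η^2 * (M^4 * P + nn * M^4 * P^3) :=
    mul_le_mul_of_nonneg_left hGG2 (sq_nonneg η)
  nlinarith [ha, hb]
theorem frobNorm_sq_step_le {n : ℕ} (hn : 1 ≤ n) (M η : ℝ) (hM : 0 < M) (hη : 0 < η)
    (x : Fin n → ℝ) (hx : euclNorm x ≤ M) (W : Matrix (Fin n) (Fin n) ℝ) :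
    frobNorm (W + η • Gmat (outer x) W) ^ 2 ≤
      (1 + 2 * M ^ 2 * η) * frobNorm W ^ 2 +
        η ^ 2 * (M ^ 4 * frobNorm W ^ 2 + ((n : ℝ) + 3) * M ^ 4 * frobNorm W ^ 6) := by
  classical
  obtain ⟨v, hv⟩ : ∃ v : Fin n → ℝ, ∀ a, v a = ∑ i, x i * W i a :=
    ⟨fun j => ∑ i, x i * W i j, fun _ => rfl⟩
  obtain ⟨B, hBdef⟩ : ∃ B, B = sigmaMat (outer x) W - Wᵀ * outer x * W := ⟨_, rfl⟩
  have hPnn : (0:ℝ) ≤ ∑ i, ∑ j, W i j ^ 2 := by positivity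
  have halnn : (0:ℝ) ≤ ∑ j, v j ^ 2 := by positivity
  have hX2nn : (0:ℝ) ≤ ∑ i, x i ^ 2 := by positivity
  -- S entries
  have hS : ∀ j k, (Wᵀ * outer x * W) j k = v j * v k := by
    intro j k
    rw [hv, hv, Fintype.sum_mul_sum]
    simp only [Matrix.mul_apply, Matrix.transpose_apply, outer, Matrix.of_apply,
      Finset.sum_mul]
    rw [Finset.sum_comm]
    exact Finset.sum_congr rfl fun b _ => Finset.sum_congr rfl fun a _ => by ring
  -- B entries
  have hBentry : ∀ p q, B p q =
      (if (q:ℕ) < p then v p * v q else if (p:ℕ) < q then -(v p * v q) else 0)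
        - v p * v q := by
    intro p q
    rw [hBdef, Matrix.sub_apply, hS]
    congr 1
    simp only [sigmaMat, Matrix.of_apply, hS]
  have hBadd : ∀ p q, B p q + B q p = -(2 * (v p * v q)) := by
    intro p q
    rw [hBentry, hBentry]
    rcases lt_trichotomy (p:ℕ) (q:ℕ) with h|h|h
    · simp [h, not_lt.mpr h.le]; ring
    · simp [h, lt_irrefl]; ring
    · simp [h, not_lt.mpr h.le]; ring
  have hBsq : ∀ p q, B p q ^2 + B q p ^2 ≤ 4 * (v p ^2 * v q ^2) := by
    intro p q
    rw [hBentry, hBentry]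
    rcases lt_trichotomy (p:ℕ) (q:ℕ) with h|h|h
    · simp [h, not_lt.mpr h.le]; nlinarith [sq_nonneg (v p * v q)]
    · simp [h, lt_irrefl]; nlinarith [sq_nonneg (v p * v q)]
    · simp [h, not_lt.mpr h.le]; nlinarith [sq_nonneg (v p * v q)]
  -- G decomposition
  have hGdecomp : Gmat (outer x) W = outer x * W + W * B := by
    rw [Gmat, hBdef, Matrix.mul_sub, ← Matrix.mul_assoc, ← Matrix.mul_assoc]
    abel
  have hGentry : ∀ i j, Gmat (outer x) W i j = x i * v j + (W * B) i j := by
    intro i j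
    rw [hGdecomp, Matrix.add_apply]
    congr 1
    rw [hv]
    simp only [Matrix.mul_apply, outer, Matrix.of_apply, Finset.mul_sum, mul_assoc]
  -- frobenius facts
  have hPfr : frobNorm W ^ 2 = ∑ i, ∑ j, W i j ^ 2 := by
    rw [frobNorm, Real.sq_sqrt hPnn]
  have hPfr6 : frobNorm W ^ 6 = (∑ i, ∑ j, W i j ^ 2)^3 := by
    rw [show (6:ℕ) = 2*3 from rfl, pow_mul, hPfr]
  have hX2M : (∑ i, x i ^ 2) ≤ M^2 := by
    have h1 : Real.sqrt (∑ i, x i ^ 2) ^ 2 = ∑ i, x i ^ 2 := Real.sq_sqrt hX2nn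
    have h2 : Real.sqrt (∑ i, x i ^ 2) ≤ M := hx
    nlinarith [Real.sqrt_nonneg (∑ i, x i ^ 2)]
  -- LHS expansion
  have hLHS : frobNorm (W + η • Gmat (outer x) W) ^ 2
      = ∑ i, ∑ j, (W i j + η * Gmat (outer x) W i j)^2 := by
    rw [frobNorm, Real.sq_sqrt (by positivity)]
    exact Finset.sum_congr rfl fun i _ => Finset.sum_congr rfl fun j _ => by
      simp [Matrix.add_apply, Matrix.smul_apply, smul_eq_mul]
  have hexp : ∑ i, ∑ j, (W i j + η * Gmat (outer x) W i j)^2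
      = (∑ i, ∑ j, W i j ^ 2)
        + 2 * η * (∑ i, ∑ j, W i j * Gmat (outer x) W i j)
        + η^2 * (∑ i, ∑ j, (Gmat (outer x) W i j)^2) := by
    rw [sum_add_sq_expand' (f := fun i j => W i j) (h := fun i j => η * Gmat (outer x) W i j)]
    have e1 : ∑ i, ∑ j, W i j * (η * Gmat (outer x) W i j)
        = η * ∑ i, ∑ j, W i j * Gmat (outer x) W i j := by
      rw [Finset.mul_sum]
      refine Finset.sum_congr rfl fun i _ => ?_
      rw [Finset.mul_sum]
      exact Finset.sum_congr rfl fun j _ => by ring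
    have e2 : ∑ i, ∑ j, (η * Gmat (outer x) W i j)^2
        = η^2 * ∑ i, ∑ j, (Gmat (outer x) W i j)^2 := by
      rw [Finset.mul_sum]
      refine Finset.sum_congr rfl fun i _ => ?_
      rw [Finset.mul_sum]
      exact Finset.sum_congr rfl fun j _ => by ring
    rw [e1, e2]; ring
  -- bound the inner product term
  have hIWG : (∑ i, ∑ j, W i j * Gmat (outer x) W i j) ≤ ∑ j, v j ^ 2 := by
    have hsplit : ∑ i, ∑ j, W i j * Gmat (outer x) W i j
        = (∑ i, ∑ j, W i j * (x i * v j)) + ∑ i, ∑ j, W i j * ((W * B) i j) := by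
      simp_rw [hGentry, mul_add, Finset.sum_add_distrib]
    rw [hsplit, aux_A1 x v W hv]
    linarith [aux_IWWB W B v hBadd]
  -- bound the squared-gradient term
  have hGG : (∑ i, ∑ j, (Gmat (outer x) W i j)^2)
      ≤ (∑ i, x i ^ 2) * (∑ j, v j ^ 2)
        + (∑ i, ∑ j, W i j ^ 2) * (2 * (∑ j, v j ^ 2)^2) := by
    have hsplit : ∑ i, ∑ j, (Gmat (outer x) W i j)^2
        = (∑ i, ∑ j, (x i * v j)^2)
          + 2 * (∑ i, ∑ j, (x i * v j) * ((W * B) i j))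
          + ∑ i, ∑ j, ((W * B) i j)^2 := by
      simp_rw [hGentry]
      exact sum_add_sq_expand' _ _
    rw [hsplit, aux_A3 x v]
    have h6 : ∑ i, ∑ j, ((W * B) i j)^2
        ≤ (∑ i, ∑ j, W i j ^ 2) * (2 * (∑ j, v j ^ 2)^2) := by
      calc ∑ i, ∑ j, ((W * B) i j)^2
          ≤ (∑ i, ∑ j, W i j ^2) * (∑ a, ∑ j, (B a j)^2) := aux_WB2 W B
        _ ≤ (∑ i, ∑ j, W i j ^ 2) * (2 * (∑ j, v j ^ 2)^2) := by
            have := aux_Bn B v hBsq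
            nlinarith [hPnn]
    linarith [aux_IXWB W B x v hv hBadd, h6]
  -- final assembly
  rw [hLHS, hexp, hPfr, hPfr6]
  have hal : (∑ j, v j ^ 2) ≤ M^2 * (∑ i, ∑ j, W i j ^ 2) := by
    have h := aux_CS x v W hv
    have := mul_le_mul_of_nonneg_right hX2M hPnn
    linarith
  have hn3 : (4:ℝ) ≤ (n:ℝ) + 3 := by
    have : (1:ℝ) ≤ (n:ℝ) := by exact_mod_cast hn
    linarith
  exact aux_final M η (∑ i, ∑ j, W i j ^ 2) (∑ j, v j ^ 2) (∑ i, x i ^ 2)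
    (∑ i, ∑ j, (Gmat (outer x) W i j)^2) (∑ i, ∑ j, W i j * Gmat (outer x) W i j)
    ((n:ℝ) + 3) hM hη hPnn halnn hX2M hal hIWG hGG hn3
end

section
/- (Stability of the SGA iteration.) Let n ≥ 1, r > 0, T > 0, M > 0, and set η(r,M,T) := 1 / ( M⁴ (1 + (n+3) r⁴ e^{2T(2M²+1)}) ). Let 0 < η ≤ η(r,M,T), let W₀ ∈ ℝ^{n×n} with ‖W₀‖_F ≤ r, let x(1), x(2), … be vectors in ℝⁿ with ‖x(k)‖₂ ≤ M for all k, and define the iterates W(0) = W₀ and W(k) = W(k−1) + η G( x(k)x(k)ᵀ, W(k−1) ). Then for every integer k with 0 ≤ k ≤ T/η one has ‖W(k)‖_F² ≤ r² e^{T(2M²+1)}. -/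
open Matrix

lemma antisym_sum {n : ℕ} (f g : Fin n → Fin n → ℝ)
    (hf : ∀ k j, f j k = - f k j) (hg : ∀ k j, g j k = g k j) :
    ∑ k, ∑ j, f k j * g k j = 0 := by
  have h1 : ∑ k, ∑ j, f k j * g k j = ∑ j, ∑ k, f k j * g k j := Finset.sum_comm
  have h2 : ∑ j : Fin n, ∑ k : Fin n, f k j * g k j
      = ∑ j : Fin n, ∑ k : Fin n, -(f j k * g j k) := by
    refine Finset.sum_congr rfl fun j _ => Finset.sum_congr rfl fun k _ => ?_
    rw [hf j k, hg j k]; ring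
  have h3 : ∑ j : Fin n, ∑ k : Fin n, -(f j k * g j k)
      = - ∑ j : Fin n, ∑ k : Fin n, f j k * g j k := by simp
  have := h1.trans (h2.trans h3)
  linarith

set_option maxHeartbeats 2000000 in
lemma key_step {n : ℕ} (M η D : ℝ) (hη : 0 ≤ η) (hD : 0 ≤ D) (hM : 0 ≤ M)
    (W : Matrix (Fin n) (Fin n) ℝ) (x : Fin n → ℝ)
    (hm : ∑ i, x i ^ 2 ≤ M ^ 2)
    (hs : ∑ i, ∑ j, W i j ^ 2 ≤ D)
    (hsmall : η * M ^ 4 * (1 + 4 * D ^ 2) ≤ 1) :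
    ∑ i, ∑ j, ((W + η • Gmat (outer x) W) i j) ^ 2 ≤
      (∑ i, ∑ j, W i j ^ 2) * (1 + η * (2 * M ^ 2 + 1)) := by
  set v : Fin n → ℝ := fun j => ∑ i, x i * W i j with hv
  set u : Fin n → ℝ := fun i => ∑ k, W i k * v k with hu
  set w : Fin n → ℝ := fun k => ∑ i, u i * W i k with hw
  set σ : Matrix (Fin n) (Fin n) ℝ := sigmaMat (outer x) W with hσdef
  have hvj : ∀ j, v j = ∑ i, x i * W i j := fun j => rfl
  have hui : ∀ i, u i = ∑ k, W i k * v k := fun i => rfl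
  have hwk : ∀ k, w k = ∑ i, u i * W i k := fun k => rfl
  set m : ℝ := ∑ i, x i ^ 2 with hmdef
  set s : ℝ := ∑ i, ∑ j, W i j ^ 2 with hsdef
  set a : ℝ := ∑ j, v j ^ 2 with hadef
  set b : ℝ := ∑ i, u i ^ 2 with hbdef
  set cw : ℝ := ∑ k, w k ^ 2 with hcwdef
  have hm0 : 0 ≤ m := Finset.sum_nonneg fun i _ => sq_nonneg _
  have hs0 : 0 ≤ s := Finset.sum_nonneg fun i _ =>
    Finset.sum_nonneg fun j _ => sq_nonneg _
  have ha0 : 0 ≤ a := Finset.sum_nonneg fun j _ => sq_nonneg _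
  have hb0 : 0 ≤ b := Finset.sum_nonneg fun i _ => sq_nonneg _
  have hcw0 : 0 ≤ cw := Finset.sum_nonneg fun k _ => sq_nonneg _
  -- entry formulas
  have hQ : ∀ j k, (Wᵀ * outer x * W) j k = v j * v k := by
    intro j k
    simp only [Matrix.mul_apply, Matrix.transpose_apply, outer, Matrix.of_apply, hvj]
    rw [Finset.sum_mul_sum, Finset.sum_comm]
    refine Finset.sum_congr rfl fun q _ => ?_
    rw [Finset.sum_mul]
    exact Finset.sum_congr rfl fun p _ => by ring
  have hσ_eq : ∀ k j, σ k j = if (j:ℕ) < (k:ℕ) then v k * v j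
      else if (k:ℕ) < (j:ℕ) then -(v k * v j) else 0 := by
    intro k j
    simp only [hσdef, sigmaMat, Matrix.of_apply, hQ]
  have hσ_anti : ∀ k j, σ j k = - σ k j := by
    intro k j
    rw [hσ_eq, hσ_eq]
    rcases lt_trichotomy (j:ℕ) (k:ℕ) with h | h | h
    · simp [h, not_lt.mpr h.le, mul_comm]
    · simp [h, lt_irrefl]
    · simp [h, not_lt.mpr h.le, mul_comm]
  have hσ_sq : ∀ k j, σ k j ^ 2 ≤ (v k * v j) ^ 2 := by
    intro k j
    rw [hσ_eq]
    split_ifs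
    · exact le_refl _
    · rw [neg_sq]
    · simpa using sq_nonneg (v k * v j)
  have hσ_abs : ∀ k j, |σ k j| ≤ |v k| * |v j| := by
    intro k j
    rw [hσ_eq]
    split_ifs
    · rw [abs_mul]
    · rw [abs_neg, abs_mul]
    · simp; positivity
  have hG : ∀ i j, Gmat (outer x) W i j = (x i - u i) * v j + ∑ k, W i k * σ k j := by
    intro i j
    have h1 : (outer x * W) i j = x i * v j := by
      simp only [Matrix.mul_apply, outer, Matrix.of_apply, hvj, Finset.mul_sum]
      exact Finset.sum_congr rfl fun k _ => by ring
    have h2 : (W * Wᵀ * outer x * W) i j = u i * v j := by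
      have hassoc : W * Wᵀ * outer x * W = W * (Wᵀ * outer x * W) := by
        rw [Matrix.mul_assoc, Matrix.mul_assoc, Matrix.mul_assoc]
      rw [hassoc]
      simp only [Matrix.mul_apply, hQ, hui, Finset.sum_mul]
      exact Finset.sum_congr rfl fun k _ => by ring
    simp only [Gmat, Matrix.add_apply, Matrix.sub_apply, h1, h2, Matrix.mul_apply, ← hσdef]
    ring
  -- basic Cauchy-Schwarz consequences
  have hsum_comm : s = ∑ j, ∑ i, W i j ^ 2 := Finset.sum_comm
  have key1 : a ≤ m * s := by
    have h : ∀ j : Fin n, v j ^ 2 ≤ m * ∑ i, W i j ^ 2 := by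
      intro j
      have := Finset.sum_mul_sq_le_sq_mul_sq Finset.univ x (fun i => W i j)
      simpa [hvj j] using this
    calc a ≤ ∑ j, m * ∑ i, W i j ^ 2 := Finset.sum_le_sum fun j _ => h j
    _ = m * ∑ j, ∑ i, W i j ^ 2 := by rw [Finset.mul_sum]
    _ = m * s := by rw [← hsum_comm]
  have key2 : b ≤ s * a := by
    have h : ∀ i : Fin n, u i ^ 2 ≤ (∑ k, W i k ^ 2) * a := by
      intro i
      have := Finset.sum_mul_sq_le_sq_mul_sq Finset.univ (fun k => W i k) v
      simpa [hui i] using this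
    calc b ≤ ∑ i, (∑ k, W i k ^ 2) * a := Finset.sum_le_sum fun i _ => h i
    _ = s * a := by rw [← Finset.sum_mul]
  have key3 : cw ≤ s * b := by
    have h : ∀ k : Fin n, w k ^ 2 ≤ b * ∑ i, W i k ^ 2 := by
      intro k
      have := Finset.sum_mul_sq_le_sq_mul_sq Finset.univ u (fun i => W i k)
      simpa [hwk k] using this
    calc cw ≤ ∑ k, b * ∑ i, W i k ^ 2 := Finset.sum_le_sum fun k _ => h k
    _ = b * ∑ k, ∑ i, W i k ^ 2 := by rw [Finset.mul_sum]
    _ = s * b := by rw [← hsum_comm]; ring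
  -- inner product with W
  have e1 : ∑ i, ∑ j, W i j * (x i * v j) = a := by
    rw [Finset.sum_comm, hadef]
    refine Finset.sum_congr rfl fun j _ => ?_
    have h : ∑ i, W i j * (x i * v j) = (∑ i, x i * W i j) * v j := by
      rw [Finset.sum_mul]
      exact Finset.sum_congr rfl fun i _ => by ring
    rw [h, ← hvj j]; ring
  have e2 : ∑ i, ∑ j, W i j * (u i * v j) = b := by
    rw [hbdef]
    refine Finset.sum_congr rfl fun i _ => ?_
    have h : ∑ j, W i j * (u i * v j) = (∑ j, W i j * v j) * u i := by
      rw [Finset.sum_mul]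
      exact Finset.sum_congr rfl fun j _ => by ring
    rw [h, ← hui i]; ring
  have e3 : ∑ i, ∑ j, ∑ k, W i j * (W i k * σ k j) = 0 := by
    have r1 : ∑ i, ∑ j, ∑ k, W i j * (W i k * σ k j)
        = ∑ j, ∑ i, ∑ k, W i j * (W i k * σ k j) := Finset.sum_comm
    have r2 : ∑ j : Fin n, ∑ i : Fin n, ∑ k : Fin n, W i j * (W i k * σ k j)
        = ∑ j : Fin n, ∑ k : Fin n, ∑ i : Fin n, W i j * (W i k * σ k j) :=
      Finset.sum_congr rfl fun j _ => Finset.sum_comm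
    have r3 : ∑ j : Fin n, ∑ k : Fin n, ∑ i : Fin n, W i j * (W i k * σ k j)
        = ∑ k : Fin n, ∑ j : Fin n, ∑ i : Fin n, W i j * (W i k * σ k j) := Finset.sum_comm
    have r4 : ∑ k : Fin n, ∑ j : Fin n, ∑ i : Fin n, W i j * (W i k * σ k j)
        = ∑ k : Fin n, ∑ j : Fin n, σ k j * (∑ i, W i k * W i j) := by
      refine Finset.sum_congr rfl fun k _ => Finset.sum_congr rfl fun j _ => ?_
      rw [Finset.mul_sum]
      exact Finset.sum_congr rfl fun i _ => by ring
    rw [r1, r2, r3, r4]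
    exact antisym_sum _ _ hσ_anti fun k j =>
      Finset.sum_congr rfl fun i _ => by ring
  have hIP : ∑ i, ∑ j, W i j * Gmat (outer x) W i j = a - b := by
    have expand : ∀ i j, W i j * Gmat (outer x) W i j
        = (W i j * (x i * v j) - W i j * (u i * v j)) + ∑ k, W i j * (W i k * σ k j) := by
      intro i j
      rw [hG i j, mul_add,
        Finset.mul_sum Finset.univ (fun k => W i k * σ k j) (W i j)]
      congr 1
      ring
    calc ∑ i, ∑ j, W i j * Gmat (outer x) W i j
        = ∑ i, ∑ j, ((W i j * (x i * v j) - W i j * (u i * v j))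
            + ∑ k, W i j * (W i k * σ k j)) := by
          exact Finset.sum_congr rfl fun i _ => Finset.sum_congr rfl fun j _ => expand i j
      _ = (∑ i, ∑ j, W i j * (x i * v j)) - (∑ i, ∑ j, W i j * (u i * v j))
            + ∑ i, ∑ j, ∑ k, W i j * (W i k * σ k j) := by
          simp [Finset.sum_add_distrib, Finset.sum_sub_distrib]
      _ = a - b := by rw [e1, e2, e3]; ring
  -- p and R parts of G
  set p : Fin n → Fin n → ℝ := fun i j => (x i - u i) * v j with hp
  set R : Fin n → Fin n → ℝ := fun i j => ∑ k, W i k * σ k j with hR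
  have hpij : ∀ i j, p i j = (x i - u i) * v j := fun _ _ => rfl
  have hRij : ∀ i j, R i j = ∑ k, W i k * σ k j := fun _ _ => rfl
  have hPP : ∑ i, ∑ j, p i j ^ 2 = (∑ i, (x i - u i) ^ 2) * a := by
    rw [Finset.sum_mul]
    refine Finset.sum_congr rfl fun i _ => ?_
    rw [hadef, Finset.mul_sum Finset.univ (fun j => v j ^ 2) ((x i - u i) ^ 2)]
    exact Finset.sum_congr rfl fun j _ => by rw [hpij]; ring
  have hxu : ∑ i, x i * u i = a := by
    have step1 : ∑ i, x i * u i = ∑ i, ∑ k, x i * (W i k * v k) :=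
      Finset.sum_congr rfl fun i _ => by
        rw [hui i, Finset.mul_sum Finset.univ (fun k => W i k * v k) (x i)]
    rw [step1, Finset.sum_comm, hadef]
    refine Finset.sum_congr rfl fun k _ => ?_
    have h : ∑ i, x i * (W i k * v k) = (∑ i, x i * W i k) * v k := by
      rw [Finset.sum_mul]
      exact Finset.sum_congr rfl fun i _ => by ring
    rw [h, ← hvj k]; ring
  have hsub : ∑ i, (x i - u i) ^ 2 = m - 2 * a + b := by
    have h : ∑ i, (x i - u i) ^ 2 = ∑ i, (x i ^ 2 - 2 * (x i * u i) + u i ^ 2) :=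
      Finset.sum_congr rfl fun i _ => by ring
    rw [h, Finset.sum_add_distrib, Finset.sum_sub_distrib,
      ← Finset.mul_sum Finset.univ (fun i => x i * u i) 2, hxu]
  -- cross term
  have hsubW : ∀ k, ∑ i, (x i - u i) * W i k = v k - w k := by
    intro k
    have h : ∑ i, (x i - u i) * W i k = ∑ i, (x i * W i k - u i * W i k) :=
      Finset.sum_congr rfl fun i _ => by ring
    rw [h, Finset.sum_sub_distrib, ← hvj k, ← hwk k]
  have hPR1 : ∑ i, ∑ j, p i j * R i j
      = ∑ k, ∑ j, σ k j * (v j * (v k - w k)) := by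
    have step1 : ∑ i, ∑ j, p i j * R i j
        = ∑ i, ∑ j, ∑ k, p i j * (W i k * σ k j) :=
      Finset.sum_congr rfl fun i _ => Finset.sum_congr rfl fun j _ => by
        rw [hRij, Finset.mul_sum Finset.univ (fun k => W i k * σ k j) (p i j)]
    have r1 : ∑ i, ∑ j, ∑ k, p i j * (W i k * σ k j)
        = ∑ j, ∑ i, ∑ k, p i j * (W i k * σ k j) := Finset.sum_comm
    have r2 : ∑ j : Fin n, ∑ i : Fin n, ∑ k : Fin n, p i j * (W i k * σ k j)
        = ∑ j : Fin n, ∑ k : Fin n, ∑ i : Fin n, p i j * (W i k * σ k j) :=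
      Finset.sum_congr rfl fun j _ => Finset.sum_comm
    have r3 : ∑ j : Fin n, ∑ k : Fin n, ∑ i : Fin n, p i j * (W i k * σ k j)
        = ∑ k : Fin n, ∑ j : Fin n, ∑ i : Fin n, p i j * (W i k * σ k j) := Finset.sum_comm
    rw [step1, r1, r2, r3]
    refine Finset.sum_congr rfl fun k _ => Finset.sum_congr rfl fun j _ => ?_
    have h : ∑ i, p i j * (W i k * σ k j) = (∑ i, (x i - u i) * W i k) * (v j * σ k j) := by
      rw [Finset.sum_mul]
      exact Finset.sum_congr rfl fun i _ => by rw [hpij]; ring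
    rw [h, hsubW k]; ring
  have hPR2 : ∑ k, ∑ j, σ k j * (v j * (v k - w k))
      = - ∑ k, ∑ j, σ k j * (v j * w k) := by
    have h : ∑ k, ∑ j, σ k j * (v j * (v k - w k))
        = ∑ k, ∑ j, (σ k j * (v k * v j) - σ k j * (v j * w k)) :=
      Finset.sum_congr rfl fun k _ => Finset.sum_congr rfl fun j _ => by ring
    have hzero : ∑ k, ∑ j, σ k j * (v k * v j) = 0 :=
      antisym_sum _ _ hσ_anti fun k j => by ring
    rw [h]
    simp only [Finset.sum_sub_distrib]
    rw [hzero]; ring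
  have habs : |∑ k, ∑ j, σ k j * (v j * w k)| ≤ (∑ k, |v k| * |w k|) * a := by
    calc |∑ k, ∑ j, σ k j * (v j * w k)|
        ≤ ∑ k, |∑ j, σ k j * (v j * w k)| := Finset.abs_sum_le_sum_abs _ _
      _ ≤ ∑ k, ∑ j, |σ k j * (v j * w k)| :=
          Finset.sum_le_sum fun k _ => Finset.abs_sum_le_sum_abs _ _
      _ ≤ ∑ k, ∑ j, (|v k| * |w k|) * v j ^ 2 := by
          refine Finset.sum_le_sum fun k _ => Finset.sum_le_sum fun j _ => ?_
          rw [abs_mul, abs_mul]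
          have h1 : |σ k j| * (|v j| * |w k|) ≤ (|v k| * |v j|) * (|v j| * |w k|) :=
            mul_le_mul_of_nonneg_right (hσ_abs k j) (by positivity)
          calc |σ k j| * (|v j| * |w k|) ≤ (|v k| * |v j|) * (|v j| * |w k|) := h1
            _ = (|v k| * |w k|) * |v j| ^ 2 := by ring
            _ = (|v k| * |w k|) * v j ^ 2 := by rw [sq_abs]
      _ = (∑ k, |v k| * |w k|) * a := by
          rw [Finset.sum_mul]
          refine Finset.sum_congr rfl fun k _ => ?_
          calc ∑ j, (|v k| * |w k|) * v j ^ 2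
              = (|v k| * |w k|) * ∑ j, v j ^ 2 :=
                (Finset.mul_sum Finset.univ (fun j => v j ^ 2) (|v k| * |w k|)).symm
            _ = |v k| * |w k| * a := by rw [← hadef]
  have hvw : ∑ k, |v k| * |w k| ≤ s * a := by
    have hnn : 0 ≤ ∑ k, |v k| * |w k| :=
      Finset.sum_nonneg fun k _ => mul_nonneg (abs_nonneg _) (abs_nonneg _)
    have hcs := Finset.sum_mul_sq_le_sq_mul_sq Finset.univ (fun k => |v k|) (fun k => |w k|)
    simp only [sq_abs] at hcs
    have hsq : (∑ k, |v k| * |w k|) ^ 2 ≤ (s * a) ^ 2 := by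
      calc (∑ k, |v k| * |w k|) ^ 2 ≤ (∑ k, v k ^ 2) * ∑ k, w k ^ 2 := hcs
        _ = a * cw := by rw [← hadef, ← hcwdef]
        _ ≤ a * (s * b) := mul_le_mul_of_nonneg_left key3 ha0
        _ ≤ a * (s * (s * a)) :=
            mul_le_mul_of_nonneg_left (mul_le_mul_of_nonneg_left key2 hs0) ha0
        _ = (s * a) ^ 2 := by ring
    exact le_of_pow_le_pow_left₀ two_ne_zero (mul_nonneg hs0 ha0) hsq
  have hPRle : ∑ i, ∑ j, p i j * R i j ≤ s * a ^ 2 := by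
    have h1 : ∑ i, ∑ j, p i j * R i j ≤ |∑ k, ∑ j, σ k j * (v j * w k)| := by
      rw [hPR1, hPR2]
      exact neg_le_abs _
    have h2 : (∑ k, |v k| * |w k|) * a ≤ (s * a) * a :=
      mul_le_mul_of_nonneg_right hvw ha0
    calc ∑ i, ∑ j, p i j * R i j ≤ |∑ k, ∑ j, σ k j * (v j * w k)| := h1
      _ ≤ (∑ k, |v k| * |w k|) * a := habs
      _ ≤ (s * a) * a := h2
      _ = s * a ^ 2 := by ring
  have hRR : ∑ i, ∑ j, R i j ^ 2 ≤ s * (a * a) := by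
    have pointCS : ∀ i j, R i j ^ 2 ≤ (∑ k, W i k ^ 2) * (∑ k, σ k j ^ 2) := by
      intro i j
      have := Finset.sum_mul_sq_le_sq_mul_sq Finset.univ (fun k => W i k) (fun k => σ k j)
      simpa [hRij i j] using this
    have hσsum : ∀ j, ∑ k, σ k j ^ 2 ≤ a * v j ^ 2 := by
      intro j
      calc ∑ k, σ k j ^ 2 ≤ ∑ k, (v k * v j) ^ 2 :=
            Finset.sum_le_sum fun k _ => hσ_sq k j
        _ = a * v j ^ 2 := by
            rw [hadef, Finset.sum_mul]
            exact Finset.sum_congr rfl fun k _ => by ring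
    calc ∑ i, ∑ j, R i j ^ 2
        ≤ ∑ i, ∑ j, (∑ k, W i k ^ 2) * (a * v j ^ 2) := by
          refine Finset.sum_le_sum fun i _ => Finset.sum_le_sum fun j _ => ?_
          exact le_trans (pointCS i j)
            (mul_le_mul_of_nonneg_left (hσsum j)
              (Finset.sum_nonneg fun k _ => sq_nonneg _))
      _ = ∑ i, (∑ k, W i k ^ 2) * (a * a) := by
          refine Finset.sum_congr rfl fun i _ => ?_
          calc ∑ j, (∑ k, W i k ^ 2) * (a * v j ^ 2)
              = ∑ j, ((∑ k, W i k ^ 2) * a) * v j ^ 2 :=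
                Finset.sum_congr rfl fun j _ => by ring
            _ = ((∑ k, W i k ^ 2) * a) * ∑ j, v j ^ 2 :=
                (Finset.mul_sum Finset.univ (fun j => v j ^ 2) _).symm
            _ = (∑ k, W i k ^ 2) * (a * a) := by rw [← hadef]; ring
      _ = s * (a * a) := by
          rw [hsdef]
          exact (Finset.sum_mul _ _ _).symm
  -- assemble the bound on ‖G‖²
  have hGsq : ∀ i j, Gmat (outer x) W i j ^ 2
      = p i j ^ 2 + 2 * (p i j * R i j) + R i j ^ 2 := by
    intro i j
    rw [hG i j, ← hpij i j, ← hRij i j]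
    ring
  have hGGsplit : ∑ i, ∑ j, Gmat (outer x) W i j ^ 2
      = (∑ i, ∑ j, p i j ^ 2) + 2 * (∑ i, ∑ j, p i j * R i j)
        + ∑ i, ∑ j, R i j ^ 2 := by
    have h2 : 2 * (∑ i, ∑ j, p i j * R i j) = ∑ i, ∑ j, 2 * (p i j * R i j) := by
      rw [Finset.mul_sum]
      exact Finset.sum_congr rfl fun i _ => Finset.mul_sum _ _ _
    rw [h2]
    simp only [← Finset.sum_add_distrib]
    exact Finset.sum_congr rfl fun i _ => Finset.sum_congr rfl fun j _ => hGsq i j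
  have hGGle : ∑ i, ∑ j, Gmat (outer x) W i j ^ 2 ≤ m ^ 2 * s * (1 + 4 * s ^ 2) := by
    have hma : m * a ≤ m * (m * s) := mul_le_mul_of_nonneg_left key1 hm0
    have hba : b * a ≤ (s * a) * a := mul_le_mul_of_nonneg_right key2 ha0
    have haa : a * a ≤ (m * s) * (m * s) :=
      mul_le_mul key1 key1 ha0 (mul_nonneg hm0 hs0)
    have hsaa : s * (a * a) ≤ s * ((m * s) * (m * s)) :=
      mul_le_mul_of_nonneg_left haa hs0
    have h1 : (∑ i, ∑ j, p i j ^ 2) = (m - 2 * a + b) * a := by rw [hPP, hsub]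
    rw [hGGsplit, h1]
    linarith only [sq_nonneg a, hPRle, hRR, hma, hba, hsaa, ha0, hs0]
  -- expansion of the new squared norm
  have pt : ∀ i j, ((W + η • Gmat (outer x) W) i j) ^ 2
      = W i j ^ 2 + 2 * η * (W i j * Gmat (outer x) W i j)
        + η ^ 2 * Gmat (outer x) W i j ^ 2 := by
    intro i j
    simp only [Matrix.add_apply, Matrix.smul_apply, smul_eq_mul]
    ring
  have hexp : ∑ i, ∑ j, ((W + η • Gmat (outer x) W) i j) ^ 2
      = s + 2 * η * (a - b) + η ^ 2 * ∑ i, ∑ j, Gmat (outer x) W i j ^ 2 := by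
    have hpull1 : 2 * η * (∑ i, ∑ j, W i j * Gmat (outer x) W i j)
        = ∑ i, ∑ j, 2 * η * (W i j * Gmat (outer x) W i j) := by
      rw [Finset.mul_sum]
      exact Finset.sum_congr rfl fun i _ => Finset.mul_sum _ _ _
    have hpull2 : η ^ 2 * (∑ i, ∑ j, Gmat (outer x) W i j ^ 2)
        = ∑ i, ∑ j, η ^ 2 * Gmat (outer x) W i j ^ 2 := by
      rw [Finset.mul_sum]
      exact Finset.sum_congr rfl fun i _ => Finset.mul_sum _ _ _
    rw [← hIP]
    rw [hpull1, hpull2, hsdef]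
    simp only [← Finset.sum_add_distrib]
    exact Finset.sum_congr rfl fun i _ => Finset.sum_congr rfl fun j _ => pt i j
  -- final numeric assembly
  have hm4 : m ^ 2 ≤ M ^ 4 := by nlinarith [hm, hm0]
  have hsD : s ^ 2 ≤ D ^ 2 := by nlinarith [hs, hs0]
  have hM4 : (0:ℝ) ≤ M ^ 4 := by positivity
  have c1a : m ^ 2 * (1 + 4 * s ^ 2) ≤ M ^ 4 * (1 + 4 * s ^ 2) :=
    mul_le_mul_of_nonneg_right hm4 (by positivity)
  have c1b : M ^ 4 * (1 + 4 * s ^ 2) ≤ M ^ 4 * (1 + 4 * D ^ 2) :=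
    mul_le_mul_of_nonneg_left (by linarith) hM4
  have c2 : η * (m ^ 2 * (1 + 4 * s ^ 2)) ≤ 1 := by
    have := mul_le_mul_of_nonneg_left (c1a.trans c1b) hη
    calc η * (m ^ 2 * (1 + 4 * s ^ 2)) ≤ η * (M ^ 4 * (1 + 4 * D ^ 2)) := this
      _ = η * M ^ 4 * (1 + 4 * D ^ 2) := by ring
      _ ≤ 1 := hsmall
  have hGGfin : η ^ 2 * (∑ i, ∑ j, Gmat (outer x) W i j ^ 2) ≤ η * s := by
    have h1 : η ^ 2 * (∑ i, ∑ j, Gmat (outer x) W i j ^ 2)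
        ≤ η ^ 2 * (m ^ 2 * s * (1 + 4 * s ^ 2)) :=
      mul_le_mul_of_nonneg_left hGGle (sq_nonneg η)
    have h2 : η ^ 2 * (m ^ 2 * s * (1 + 4 * s ^ 2))
        = (η * s) * (η * (m ^ 2 * (1 + 4 * s ^ 2))) := by ring
    have h3 : (η * s) * (η * (m ^ 2 * (1 + 4 * s ^ 2))) ≤ (η * s) * 1 :=
      mul_le_mul_of_nonneg_left c2 (mul_nonneg hη hs0)
    calc η ^ 2 * (∑ i, ∑ j, Gmat (outer x) W i j ^ 2)
        ≤ η ^ 2 * (m ^ 2 * s * (1 + 4 * s ^ 2)) := h1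
      _ = (η * s) * (η * (m ^ 2 * (1 + 4 * s ^ 2))) := h2
      _ ≤ (η * s) * 1 := h3
      _ = η * s := by ring
  have hams : a ≤ M ^ 2 * s := key1.trans (mul_le_mul_of_nonneg_right hm hs0)
  have hab : 2 * η * (a - b) ≤ 2 * η * (M ^ 2 * s) := by
    have : a - b ≤ M ^ 2 * s := by linarith
    exact mul_le_mul_of_nonneg_left this (by positivity)
  rw [hexp]
  have hrhs : s * (1 + η * (2 * M ^ 2 + 1)) = s + 2 * η * (M ^ 2 * s) + η * s := by ring
  linarith only [hGGfin, hab, hrhs]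

/-- Stability of Oja's SGA iteration: for learning rate `η ≤ η(r,M,T)`, the iterates remain
bounded in Frobenius norm, `‖W(k)‖_F² ≤ r² e^{T(2M²+1)}`, for all `0 ≤ k ≤ T/η`. -/
theorem sga_stability {n : ℕ} (hn : 1 ≤ n) (r T M : ℝ) (hr : 0 < r) (hT : 0 < T)
    (hM : 0 < M) (η : ℝ) (hη0 : 0 < η)
    (hη : η ≤ 1 / (M ^ 4 * (1 + ((n : ℝ) + 3) * r ^ 4 * Real.exp (2 * T * (2 * M ^ 2 + 1)))))
    (W₀ : Matrix (Fin n) (Fin n) ℝ) (hW₀ : frobNorm W₀ ≤ r)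
    (x : ℕ → Fin n → ℝ) (hx : ∀ k, euclNorm (x k) ≤ M)
    (W : ℕ → Matrix (Fin n) (Fin n) ℝ) (hW0 : W 0 = W₀)
    (hWrec : ∀ k : ℕ, W (k + 1) = W k + η • Gmat (outer (x (k + 1))) (W k)) :
    ∀ k : ℕ, (k : ℝ) ≤ T / η →
      frobNorm (W k) ^ 2 ≤ r ^ 2 * Real.exp (T * (2 * M ^ 2 + 1)) := by
  have hX0 : 0 < M ^ 4 * (1 + ((n : ℝ) + 3) * r ^ 4 * Real.exp (2 * T * (2 * M ^ 2 + 1))) := by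
    positivity
  have hηX : η * (M ^ 4 * (1 + ((n : ℝ) + 3) * r ^ 4 * Real.exp (2 * T * (2 * M ^ 2 + 1)))) ≤ 1 :=
    (le_div_iff₀ hX0).mp hη
  set c : ℝ := 2 * M ^ 2 + 1 with hc
  have hc0 : 0 < c := by positivity
  set B : ℝ := r ^ 2 * Real.exp (T * c) with hB
  have hB0 : 0 < B := by positivity
  have hB2 : B ^ 2 = r ^ 4 * Real.exp (2 * T * c) := by
    rw [hB, mul_pow, sq (Real.exp (T * c)), ← Real.exp_add]
    have h : T * c + T * c = 2 * T * c := by ring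
    rw [h]
    ring
  have hS : ∀ k : ℕ, (0:ℝ) ≤ ∑ i, ∑ j, W k i j ^ 2 := fun k =>
    Finset.sum_nonneg fun i _ => Finset.sum_nonneg fun j _ => sq_nonneg _
  have hS0 : ∑ i, ∑ j, W 0 i j ^ 2 ≤ r ^ 2 := by
    have h1 : Real.sqrt (∑ i, ∑ j, W 0 i j ^ 2) ≤ r := by
      rw [hW0]; exact hW₀
    have h2 := Real.sq_sqrt (hS 0)
    nlinarith [Real.sqrt_nonneg (∑ i, ∑ j, W 0 i j ^ 2)]
  have hxk : ∀ k, ∑ i, x k i ^ 2 ≤ M ^ 2 := by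
    intro k
    have h0 : (0:ℝ) ≤ ∑ i, x k i ^ 2 := Finset.sum_nonneg fun i _ => sq_nonneg _
    have h1 : Real.sqrt (∑ i, x k i ^ 2) ≤ M := hx k
    have h2 := Real.sq_sqrt h0
    nlinarith [Real.sqrt_nonneg (∑ i, x k i ^ 2)]
  have hsmall : η * M ^ 4 * (1 + 4 * B ^ 2) ≤ 1 := by
    have hn' : (4:ℝ) ≤ (n : ℝ) + 3 := by
      have : (1:ℝ) ≤ (n : ℝ) := by exact_mod_cast hn
      linarith
    have hexp0 : (0:ℝ) < r ^ 4 * Real.exp (2 * T * c) := by positivity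
    have h1 : 1 + 4 * B ^ 2 ≤ 1 + ((n : ℝ) + 3) * r ^ 4 * Real.exp (2 * T * (2 * M ^ 2 + 1)) := by
      rw [hB2, hc]
      nlinarith [hexp0]
    have h2 : η * M ^ 4 * (1 + 4 * B ^ 2)
        ≤ η * M ^ 4 * (1 + ((n : ℝ) + 3) * r ^ 4 * Real.exp (2 * T * (2 * M ^ 2 + 1))) := by
      apply mul_le_mul_of_nonneg_left h1 (by positivity)
    calc η * M ^ 4 * (1 + 4 * B ^ 2)
        ≤ η * M ^ 4 * (1 + ((n : ℝ) + 3) * r ^ 4 * Real.exp (2 * T * (2 * M ^ 2 + 1))) := h2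
      _ = η * (M ^ 4 * (1 + ((n : ℝ) + 3) * r ^ 4 * Real.exp (2 * T * (2 * M ^ 2 + 1)))) := by ring
      _ ≤ 1 := hηX
  have hgrow0 : (0:ℝ) ≤ 1 + η * c := by positivity
  -- geometric bound implies B bound
  have hgeomB : ∀ k : ℕ, (k : ℝ) ≤ T / η → r ^ 2 * (1 + η * c) ^ k ≤ B := by
    intro k hk
    have hkη : (k : ℝ) * η ≤ T := by
      rw [div_eq_mul_inv] at hk
      calc (k : ℝ) * η ≤ (T * η⁻¹) * η := mul_le_mul_of_nonneg_right hk hη0.le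
        _ = T := by field_simp
    have h1 : (1 + η * c) ^ k ≤ Real.exp (η * c) ^ k := by
      apply pow_le_pow_left₀ hgrow0
      linarith [Real.add_one_le_exp (η * c)]
    have h2 : Real.exp (η * c) ^ k = Real.exp ((k : ℝ) * (η * c)) := by
      rw [← Real.exp_nat_mul]
    have h3 : Real.exp ((k : ℝ) * (η * c)) ≤ Real.exp (T * c) := by
      apply Real.exp_le_exp.mpr
      have : (k : ℝ) * η * c ≤ T * c := mul_le_mul_of_nonneg_right hkη hc0.le
      linarith [this]
    rw [hB]
    have : (1 + η * c) ^ k ≤ Real.exp (T * c) := by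
      calc (1 + η * c) ^ k ≤ Real.exp (η * c) ^ k := h1
        _ = Real.exp ((k : ℝ) * (η * c)) := h2
        _ ≤ Real.exp (T * c) := h3
    exact mul_le_mul_of_nonneg_left this (sq_nonneg r)
  -- main induction
  have main : ∀ k : ℕ, (k : ℝ) ≤ T / η →
      ∑ i, ∑ j, W k i j ^ 2 ≤ r ^ 2 * (1 + η * c) ^ k := by
    intro k
    induction k with
    | zero => intro _; simpa using hS0
    | succ k ih =>
      intro hk1
      have hk : (k : ℝ) ≤ T / η := by
        have : (k : ℝ) ≤ (k : ℝ) + 1 := by linarith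
        calc (k : ℝ) ≤ (k : ℝ) + 1 := this
          _ = ((k + 1 : ℕ) : ℝ) := by push_cast; ring
          _ ≤ T / η := hk1
      have hSk := ih hk
      have hSkB : ∑ i, ∑ j, W k i j ^ 2 ≤ B := hSk.trans (hgeomB k hk)
      have hstep := key_step M η B hη0.le hB0.le hM.le (W k) (x (k + 1))
        (hxk (k + 1)) hSkB hsmall
      rw [← hWrec k] at hstep
      calc ∑ i, ∑ j, W (k + 1) i j ^ 2
          ≤ (∑ i, ∑ j, W k i j ^ 2) * (1 + η * (2 * M ^ 2 + 1)) := hstep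
        _ ≤ (r ^ 2 * (1 + η * c) ^ k) * (1 + η * c) := by
            rw [hc]
            exact mul_le_mul_of_nonneg_right hSk (by positivity)
        _ = r ^ 2 * (1 + η * c) ^ (k + 1) := by ring
  intro k hk
  have h1 : frobNorm (W k) ^ 2 = ∑ i, ∑ j, W k i j ^ 2 := Real.sq_sqrt (hS k)
  rw [h1]
  calc ∑ i, ∑ j, W k i j ^ 2 ≤ r ^ 2 * (1 + η * c) ^ k := main k hk
    _ ≤ B := hgeomB k hk
    _ = r ^ 2 * Real.exp (T * (2 * M ^ 2 + 1)) := by rw [hB, hc]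
end

section
/- Let n ≥ 1, let Λ ∈ ℝ^{n×n} be symmetric, and let W ∈ ℝ^{n×n} be arbitrary. Then Σ(Λ,W) is skew-symmetric, i.e. Σ(Λ,W)ᵀ = −Σ(Λ,W), and the following matrix identity holds: W G(Λ,W)ᵀ + G(Λ,W) Wᵀ = WWᵀΛ + ΛWWᵀ − 2 WWᵀ Λ WWᵀ. -/
open Matrix

/-- For symmetric `Λ`, `Σ(Λ,W)` is skew-symmetric and
`W G(Λ,W)ᵀ + G(Λ,W) Wᵀ = WWᵀΛ + ΛWWᵀ − 2 WWᵀΛWWᵀ`. -/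
theorem sigma_skew_and_riccati_identity {n : ℕ} (hn : 1 ≤ n)
    (Λ W : Matrix (Fin n) (Fin n) ℝ) (hΛ : Λᵀ = Λ) :
    (sigmaMat Λ W)ᵀ = -sigmaMat Λ W ∧
    W * (Gmat Λ W)ᵀ + Gmat Λ W * Wᵀ =
      W * Wᵀ * Λ + Λ * (W * Wᵀ) - 2 • (W * Wᵀ * Λ * (W * Wᵀ)) := by
  have hM : (Wᵀ * Λ * W)ᵀ = Wᵀ * Λ * W := by
    simp [Matrix.transpose_mul, hΛ, Matrix.mul_assoc]
  have hskew : (sigmaMat Λ W)ᵀ = -sigmaMat Λ W := by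
    ext j k
    have := congrFun (congrFun hM k) j
    simp only [Matrix.transpose_apply, Matrix.neg_apply, sigmaMat, Matrix.of_apply] at this ⊢
    rcases lt_trichotomy (j : ℕ) (k : ℕ) with h | h | h
    · simp [h, not_lt.mpr h.le, this]
    · simp [h, lt_irrefl]
    · simp [h, not_lt.mpr h.le, this]
  refine ⟨hskew, ?_⟩
  have hG : (Gmat Λ W)ᵀ = Wᵀ * Λ - Wᵀ * Λ * W * Wᵀ - sigmaMat Λ W * Wᵀ := by
    simp only [Gmat, Matrix.transpose_add, Matrix.transpose_sub, Matrix.transpose_mul, hΛ,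
      hskew, Matrix.transpose_transpose, Matrix.neg_mul]
    noncomm_ring
  rw [hG, Gmat]
  simp only [Matrix.mul_sub, Matrix.mul_add, Matrix.sub_mul, Matrix.add_mul, two_smul]
  noncomm_ring
end

section
/- (Invariance of the Stiefel manifold for the PCA flow.) Let n ≥ 1, let A ∈ ℝ^{n×n} be symmetric, and let W : [0,∞) → ℝ^{n×n} be differentiable with W′(t) = G(A, W(t)) for all t ≥ 0 and W(0)ᵀ W(0) = I. Then W(t)ᵀ W(t) = I for all t ≥ 0, i.e. W(t) remains in the orthogonal group O(n) for all time. -/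
open Matrix

attribute [local instance] Matrix.frobeniusNormedAddCommGroup Matrix.frobeniusNormedSpace

attribute [local instance] Matrix.frobeniusNormedRing Matrix.frobeniusNormedAlgebra

/-- Transpose as a continuous linear map. -/
noncomputable def transCLM (n : ℕ) :
    Matrix (Fin n) (Fin n) ℝ →L[ℝ] Matrix (Fin n) (Fin n) ℝ :=
  LinearMap.toContinuousLinearMap (Matrix.transposeLinearEquiv (Fin n) (Fin n) ℝ ℝ).toLinearMap

lemma transCLM_apply {n : ℕ} (M : Matrix (Fin n) (Fin n) ℝ) : transCLM n M = Mᵀ := rfl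

lemma sigma_transpose {n : ℕ} (A Q : Matrix (Fin n) (Fin n) ℝ) (hA : Aᵀ = A) :
    (sigmaMat A Q)ᵀ = -(sigmaMat A Q) := by
  have hM : (Qᵀ * A * Q)ᵀ = Qᵀ * A * Q := by
    simp [Matrix.transpose_mul, Matrix.mul_assoc, hA]
  ext j k
  have hMe : (Qᵀ * A * Q) k j = (Qᵀ * A * Q) j k := by
    conv_rhs => rw [← hM]
    rfl
  simp only [Matrix.transpose_apply, Matrix.neg_apply, sigmaMat, Matrix.of_apply]
  rcases lt_trichotomy (j : ℕ) (k : ℕ) with h | h | h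
  · simp [h, not_lt.mpr h.le, hMe]
  · simp [h, lt_irrefl]
  · simp [h, not_lt.mpr h.le, hMe]

lemma key_identity {n : ℕ} (A Q : Matrix (Fin n) (Fin n) ℝ) (hA : Aᵀ = A) :
    (Gmat A Q)ᵀ * Q + Qᵀ * Gmat A Q =
      -((Qᵀ * A * Q) * (Qᵀ * Q - 1) + (Qᵀ * Q - 1) * (Qᵀ * A * Q) +
        sigmaMat A Q * (Qᵀ * Q - 1) - (Qᵀ * Q - 1) * sigmaMat A Q) := by
  simp only [Gmat, Matrix.transpose_add, Matrix.transpose_sub, Matrix.transpose_mul,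
    Matrix.transpose_transpose, hA, sigma_transpose A Q hA]
  noncomm_ring

lemma sigma_norm_le {n : ℕ} (A Q : Matrix (Fin n) (Fin n) ℝ) :
    ‖sigmaMat A Q‖ ≤ ‖Qᵀ * A * Q‖ := by
  rw [Matrix.frobenius_norm_def, Matrix.frobenius_norm_def]
  refine Real.rpow_le_rpow (by positivity) ?_ (by norm_num)
  apply Finset.sum_le_sum
  intro i _
  apply Finset.sum_le_sum
  intro j _
  refine Real.rpow_le_rpow (by positivity) ?_ (by norm_num)
  simp only [sigmaMat, Matrix.of_apply]
  split_ifs with h1 h2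
  · exact le_rfl
  · simp
  · simp [norm_nonneg]

/-- Invariance of the Stiefel manifold (orthogonal group) for the PCA flow `Ẇ = G(A,W)`:
if `W(0)ᵀW(0) = I` then `W(t)ᵀW(t) = I` for all `t ≥ 0`. -/
theorem stiefel_invariance_pca_flow {n : ℕ} (hn : 1 ≤ n)
    (A : Matrix (Fin n) (Fin n) ℝ) (hA : Aᵀ = A)
    (W : ℝ → Matrix (Fin n) (Fin n) ℝ)
    (hW : ∀ t : ℝ, 0 ≤ t → HasDerivAt W (Gmat A (W t)) t)
    (hW0 : (W 0)ᵀ * W 0 = 1) :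
    ∀ t : ℝ, 0 ≤ t → (W t)ᵀ * W t = 1 := by
  intro t₀ ht₀
  set Y : ℝ → Matrix (Fin n) (Fin n) ℝ := fun t => (W t)ᵀ * W t - 1 with hYdef
  set F : ℝ → Matrix (Fin n) (Fin n) ℝ := fun t =>
    -(((W t)ᵀ * A * W t) * Y t + Y t * ((W t)ᵀ * A * W t) +
      sigmaMat A (W t) * Y t - Y t * sigmaMat A (W t)) with hFdef
  have hYd : ∀ t : ℝ, 0 ≤ t → HasDerivAt Y (F t) t := by
    intro t ht
    have hT : HasDerivAt (fun s => (W s)ᵀ) (Gmat A (W t))ᵀ t := by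
      have := (transCLM n).hasFDerivAt.comp_hasDerivAt t (hW t ht)
      exact this
    have hmul := (hT.mul (hW t ht)).sub_const (1 : Matrix (Fin n) (Fin n) ℝ)
    have : (Gmat A (W t))ᵀ * W t + (W t)ᵀ * Gmat A (W t) = F t := by
      rw [key_identity A (W t) hA]
    rw [← this]
    exact hmul
  have hYc : ContinuousOn Y (Set.Icc 0 t₀) := fun s hs =>
    ((hYd s hs.1).continuousAt).continuousWithinAt
  -- bound constant
  have hWc : ContinuousOn (fun s => ‖W s‖) (Set.Icc 0 t₀) := fun s hs =>
    (continuous_norm.continuousAt.comp ((hW s hs.1).continuousAt)).continuousWithinAt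
  obtain ⟨u, hu, hmax⟩ := isCompact_Icc.exists_isMaxOn ⟨0, le_refl 0, ht₀⟩ hWc
  set C : ℝ := 4 * ‖A‖ * ‖W u‖ ^ 2 with hCdef
  have bound : ∀ s ∈ Set.Ico 0 t₀, ‖F s‖ ≤ C * ‖Y s‖ + 0 := by
    intro s hs
    have hM : ‖(W s)ᵀ * A * W s‖ ≤ ‖A‖ * ‖W s‖ ^ 2 := by
      calc ‖(W s)ᵀ * A * W s‖ ≤ ‖(W s)ᵀ * A‖ * ‖W s‖ := norm_mul_le _ _
        _ ≤ ‖(W s)ᵀ‖ * ‖A‖ * ‖W s‖ :=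
            mul_le_mul_of_nonneg_right (norm_mul_le _ _) (norm_nonneg _)
        _ = ‖A‖ * ‖W s‖ ^ 2 := by
            rw [Matrix.frobenius_norm_transpose]; ring
    have hSig : ‖sigmaMat A (W s)‖ ≤ ‖A‖ * ‖W s‖ ^ 2 :=
      le_trans (sigma_norm_le A (W s)) hM
    have hWs : ‖W s‖ ≤ ‖W u‖ := hmax ⟨hs.1, hs.2.le⟩
    have hWs2 : ‖W s‖ ^ 2 ≤ ‖W u‖ ^ 2 := by
      have := norm_nonneg (W s); nlinarith
    have hMC : ‖(W s)ᵀ * A * W s‖ ≤ ‖A‖ * ‖W u‖ ^ 2 := by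
      have hA0 := norm_nonneg A
      nlinarith
    have hSigC : ‖sigmaMat A (W s)‖ ≤ ‖A‖ * ‖W u‖ ^ 2 := by
      have hA0 := norm_nonneg A
      nlinarith
    have hy := norm_nonneg (Y s)
    calc ‖F s‖ ≤ ‖(W s)ᵀ * A * W s‖ * ‖Y s‖ + ‖Y s‖ * ‖(W s)ᵀ * A * W s‖ +
          ‖sigmaMat A (W s)‖ * ‖Y s‖ + ‖Y s‖ * ‖sigmaMat A (W s)‖ := by
          rw [hFdef]
          simp only [norm_neg]
          calc ‖((W s)ᵀ * A * W s) * Y s + Y s * ((W s)ᵀ * A * W s) +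
                sigmaMat A (W s) * Y s - Y s * sigmaMat A (W s)‖
              ≤ ‖((W s)ᵀ * A * W s) * Y s + Y s * ((W s)ᵀ * A * W s) +
                sigmaMat A (W s) * Y s‖ + ‖Y s * sigmaMat A (W s)‖ := norm_sub_le _ _
            _ ≤ ‖((W s)ᵀ * A * W s) * Y s + Y s * ((W s)ᵀ * A * W s)‖ +
                ‖sigmaMat A (W s) * Y s‖ + ‖Y s * sigmaMat A (W s)‖ := by
                gcongr; exact norm_add_le _ _
            _ ≤ ‖((W s)ᵀ * A * W s) * Y s‖ + ‖Y s * ((W s)ᵀ * A * W s)‖ +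
                ‖sigmaMat A (W s) * Y s‖ + ‖Y s * sigmaMat A (W s)‖ := by
                gcongr; exact norm_add_le _ _
            _ ≤ _ := by
                gcongr <;> first
                  | exact norm_mul_le _ _
    _ ≤ C * ‖Y s‖ + 0 := by
          rw [hCdef]
          nlinarith [norm_nonneg (sigmaMat A (W s)), norm_nonneg ((W s)ᵀ * A * W s)]
  have hgron := norm_le_gronwallBound_of_norm_deriv_right_le (δ := 0) (K := C) (ε := 0)
    hYc (fun s hs => (hYd s hs.1).hasDerivWithinAt)
    (by simp [hYdef, hW0]) bound t₀ ⟨ht₀, le_refl _⟩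
  rw [gronwallBound_ε0_δ0] at hgron
  have hY0 : Y t₀ = 0 := norm_le_zero_iff.mp hgron
  have h2 : (W t₀)ᵀ * W t₀ - 1 = 0 := hY0
  linear_combination (norm := module) h2
end

section
/- (Commutation of the projection with the covariance tensor.) Let n ≥ 1, M > 0, let ν be a probability measure on ℝⁿ supported in { x : ‖x‖₂ ≤ M }, set A := ∫ xxᵀ dν(x), and for W ∈ ℝ^{n×n} with WᵀW = I and WWᵀ = I define M_{ijkl} := ∫ G(xxᵀ − A, W)_{ij} G(xxᵀ − A, W)_{kl} dν(x) and P_{ijkl} := (1/2)( Σ_s w_{is} w_{ks} δ_{jl} − w_{kj} w_{il} ). Then M = P M P and P M = M P, where products of fourth-order tensors are defined by (S T)_{ijkl} := Σ_{r,s} S_{ijrs} T_{rskl}. -/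
open Matrix

open MeasureTheory

section alg
variable {n : ℕ} (Λ W : Matrix (Fin n) (Fin n) ℝ)

lemma hWG (h1 : Wᵀ * W = 1) : Wᵀ * Gmat Λ W = sigmaMat Λ W := by
  simp only [Gmat, Matrix.mul_sub, Matrix.mul_add, ← Matrix.mul_assoc, h1, Matrix.one_mul]
  simp

lemma hSkew (hS : Λᵀ = Λ) : (sigmaMat Λ W)ᵀ = - sigmaMat Λ W := by
  have h3 : (Wᵀ * Λ * W)ᵀ = Wᵀ * Λ * W := by
    simp [Matrix.transpose_mul, hS, Matrix.mul_assoc]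
  ext j k
  have h4 : (Wᵀ * Λ * W) k j = (Wᵀ * Λ * W) j k := by
    conv_lhs => rw [← h3]
    simp
  simp only [sigmaMat, Matrix.transpose_apply, Matrix.of_apply, Matrix.neg_apply]
  rcases lt_trichotomy (j : ℕ) (k : ℕ) with h | h | h
  · simp [h, not_lt.2 h.le, h4]
  · simp [h, lt_irrefl]
  · simp [h, not_lt.2 h.le, h4]

lemma hGWS (h1 : Wᵀ * W = 1) (h2 : W * Wᵀ = 1) : Gmat Λ W = W * sigmaMat Λ W := by
  rw [← hWG Λ W h1, ← Matrix.mul_assoc, h2, Matrix.one_mul]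

end alg

section alg2
variable {n : ℕ} (Λ W : Matrix (Fin n) (Fin n) ℝ)

lemma key2 (h1 : Wᵀ * W = 1) (h2 : W * Wᵀ = 1) (hS : Λᵀ = Λ) (i j : Fin n) :
    ∑ r, ∑ s, W r j * W i s * Gmat Λ W r s = - Gmat Λ W i j := by
  set G := Gmat Λ W with hGdef
  set S := sigmaMat Λ W with hSdef
  have hWG' : ∀ a b, ∑ r, W r a * G r b = S a b := by
    intro a b
    have := congrFun (congrFun (hWG Λ W h1) a) b
    simpa [Matrix.mul_apply, Matrix.transpose_apply] using this
  have hS' : ∀ a b, S a b = - S b a := by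
    intro a b
    have := congrFun (congrFun (hSkew Λ W hS) b) a
    simp only [Matrix.transpose_apply, Matrix.neg_apply] at this
    rw [hSdef, this]
  calc ∑ r, ∑ s, W r j * W i s * G r s
      = ∑ s, ∑ r, W r j * W i s * G r s := Finset.sum_comm
    _ = ∑ s, W i s * ∑ r, W r j * G r s := by
        refine Finset.sum_congr rfl fun s _ => ?_
        rw [Finset.mul_sum]
        exact Finset.sum_congr rfl fun r _ => by ring
    _ = ∑ s, W i s * (- S s j) := by
        refine Finset.sum_congr rfl fun s _ => ?_
        rw [hWG', hS' j s]
    _ = - (W * S) i j := by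
        simp [Matrix.mul_apply, ← Finset.sum_neg_distrib]
    _ = - G i j := by rw [← hGWS Λ W h1 h2]

lemma ortho_sum (h2 : W * Wᵀ = 1) (i r : Fin n) :
    (∑ t, W i t * W r t) = if i = r then (1:ℝ) else 0 := by
  have := congrFun (congrFun h2 i) r
  simpa [Matrix.mul_apply, Matrix.one_apply, Matrix.transpose_apply] using this

lemma alg1 (h1 : Wᵀ * W = 1) (h2 : W * Wᵀ = 1) (hS : Λᵀ = Λ) (i j : Fin n) :
    ∑ r, ∑ s, ((1/2 : ℝ) * ((∑ t, W i t * W r t) * (if j = s then (1:ℝ) else 0)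
        - W r j * W i s)) * Gmat Λ W r s = Gmat Λ W i j := by
  set G := Gmat Λ W with hGdef
  have step : ∀ r s, ((1/2 : ℝ) * ((∑ t, W i t * W r t) * (if j = s then (1:ℝ) else 0)
      - W r j * W i s)) * G r s
      = (1/2) * ((if i = r then (1:ℝ) else 0) * ((if j = s then (1:ℝ) else 0) * G r s))
        - (1/2) * (W r j * W i s * G r s) := by
    intro r s
    rw [ortho_sum W h2]
    ring
  rw [Finset.sum_congr rfl fun r _ => Finset.sum_congr rfl fun s _ => step r s]
  simp only [Finset.sum_sub_distrib]
  have e1 : ∑ r, ∑ s, ((if i = r then (1:ℝ) else 0) * ((if j = s then (1:ℝ) else 0) * G r s))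
      = G i j := by
    simp [ite_mul, mul_ite, Finset.sum_ite_eq]
  have e2 : ∑ r, ∑ s, (1/2 : ℝ) * (W r j * W i s * G r s) = (1/2 : ℝ) * (- G i j) := by
    simp only [← Finset.mul_sum]
    rw [key2 Λ W h1 h2 hS]
  rw [show (∑ r, ∑ s, (1/2:ℝ) * ((if i = r then (1:ℝ) else 0) * ((if j = s then (1:ℝ) else 0) * G r s))) = (1/2:ℝ) * ∑ r, ∑ s, ((if i = r then (1:ℝ) else 0) * ((if j = s then (1:ℝ) else 0) * G r s)) by simp only [← Finset.mul_sum], e1, e2]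
  ring

end alg2

lemma alg2 {n : ℕ} (Λ W : Matrix (Fin n) (Fin n) ℝ)
    (h1 : Wᵀ * W = 1) (h2 : W * Wᵀ = 1) (hS : Λᵀ = Λ) (k l : Fin n) :
    ∑ r, ∑ s, Gmat Λ W r s * ((1/2 : ℝ) * ((∑ t, W r t * W k t) * (if s = l then (1:ℝ) else 0)
        - W k s * W r l)) = Gmat Λ W k l := by
  set G := Gmat Λ W with hGdef
  have step : ∀ r s, G r s * ((1/2 : ℝ) * ((∑ t, W r t * W k t) * (if s = l then (1:ℝ) else 0)
      - W k s * W r l))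
      = (1/2) * ((if r = k then (1:ℝ) else 0) * ((if s = l then (1:ℝ) else 0) * G r s))
        - (1/2) * (W r l * W k s * G r s) := by
    intro r s
    rw [ortho_sum W h2]
    ring
  rw [Finset.sum_congr rfl fun r _ => Finset.sum_congr rfl fun s _ => step r s]
  simp only [Finset.sum_sub_distrib]
  have e1 : ∑ r, ∑ s, ((if r = k then (1:ℝ) else 0) * ((if s = l then (1:ℝ) else 0) * G r s))
      = G k l := by
    simp [ite_mul, mul_ite, Finset.sum_ite_eq']
  have e2 : ∑ r, ∑ s, (1/2 : ℝ) * (W r l * W k s * G r s) = (1/2 : ℝ) * (- G k l) := by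
    simp only [← Finset.mul_sum]
    rw [key2 Λ W h1 h2 hS]
  rw [show (∑ r, ∑ s, (1/2:ℝ) * ((if r = k then (1:ℝ) else 0) * ((if s = l then (1:ℝ) else 0) * G r s))) = (1/2:ℝ) * ∑ r, ∑ s, ((if r = k then (1:ℝ) else 0) * ((if s = l then (1:ℝ) else 0) * G r s)) by simp only [← Finset.mul_sum], e1, e2]
  ring

section cont
variable {n : ℕ} (A W : Matrix (Fin n) (Fin n) ℝ)

lemma c0 (a b : Fin n) : Continuous fun x : Fin n → ℝ => (outer x - A) a b := by
  simp only [outer, Matrix.sub_apply, Matrix.of_apply]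
  fun_prop

lemma c2 (a b : Fin n) : Continuous fun x : Fin n → ℝ => (Wᵀ * (outer x - A) * W) a b := by
  simp only [Matrix.mul_apply]
  refine continuous_finset_sum _ fun k _ => ?_
  refine Continuous.mul (continuous_finset_sum _ fun m _ => ?_) continuous_const
  exact Continuous.mul continuous_const (c0 A m k)

lemma c3 (a b : Fin n) : Continuous fun x : Fin n → ℝ => sigmaMat (outer x - A) W a b := by
  simp only [sigmaMat, Matrix.of_apply]
  split_ifs
  · exact c2 A W a b
  · exact (c2 A W a b).neg
  · exact continuous_const

lemma cG (a b : Fin n) : Continuous fun x : Fin n → ℝ => Gmat (outer x - A) W a b := by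
  have e : ∀ x : Fin n → ℝ, Gmat (outer x - A) W a b
      = ((outer x - A) * W) a b - (W * (Wᵀ * (outer x - A) * W)) a b
        + (W * sigmaMat (outer x - A) W) a b := by
    intro x
    simp [Gmat, Matrix.mul_assoc]
  simp only [e]
  refine Continuous.add (Continuous.sub ?_ ?_) ?_
  · simp only [Matrix.mul_apply]
    exact continuous_finset_sum _ fun k _ => (c0 A a k).mul continuous_const
  · simp only [Matrix.mul_apply (M := W)]
    exact continuous_finset_sum _ fun k _ => continuous_const.mul (c2 A W k b)
  · simp only [Matrix.mul_apply (M := W)]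
    exact continuous_finset_sum _ fun k _ => continuous_const.mul (c3 A W k b)

end cont

lemma contEucl {n : ℕ} : Continuous (euclNorm (n := n)) := by
  unfold euclNorm
  fun_prop

lemma abs_le_of_eucl {n : ℕ} {x : Fin n → ℝ} {M : ℝ} (h : euclNorm x ≤ M) (i : Fin n) :
    |x i| ≤ M := by
  have h1 : |x i| = Real.sqrt ((x i) ^ 2) := (Real.sqrt_sq_eq_abs _).symm
  rw [h1]
  refine le_trans (Real.sqrt_le_sqrt ?_) h
  exact Finset.single_le_sum (fun j _ => sq_nonneg (x j)) (Finset.mem_univ i)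

lemma compactK {n : ℕ} {M : ℝ} (hM : 0 < M) :
    IsCompact {x : Fin n → ℝ | euclNorm x ≤ M} := by
  have hclosed : IsClosed {x : Fin n → ℝ | euclNorm x ≤ M} :=
    isClosed_le contEucl continuous_const
  refine IsCompact.of_isClosed_subset (isCompact_closedBall (0 : Fin n → ℝ) M) hclosed ?_
  intro x hx
  simp only [Metric.mem_closedBall, dist_zero_right]
  rw [pi_norm_le_iff_of_nonneg hM.le]
  intro i
  simpa [Real.norm_eq_abs] using abs_le_of_eucl hx i

lemma integG {n : ℕ} (A W : Matrix (Fin n) (Fin n) ℝ) (M : ℝ) (hM : 0 < M)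
    (ν : Measure (Fin n → ℝ)) [IsProbabilityMeasure ν]
    (hsupp : ν {x | euclNorm x ≤ M} = 1) (a b c d : Fin n) :
    Integrable (fun x => Gmat (outer x - A) W a b * Gmat (outer x - A) W c d) ν := by
  set K := {x : Fin n → ℝ | euclNorm x ≤ M} with hK
  have hc : Continuous fun x => Gmat (outer x - A) W a b * Gmat (outer x - A) W c d :=
    (cG A W a b).mul (cG A W c d)
  obtain ⟨C, hC⟩ := (compactK (n := n) hM).exists_bound_of_continuousOn hc.continuousOn
  have hmeas : MeasurableSet K := (isClosed_le contEucl continuous_const).measurableSet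
  have hae : ∀ᵐ x ∂ν, x ∈ K := by
    rw [ae_iff]
    have : ν Kᶜ = 0 := by
      rw [prob_compl_eq_zero_iff hmeas]
      exact hsupp
    exact this
  refine Integrable.mono' (integrable_const C) hc.aestronglyMeasurable ?_
  filter_upwards [hae] with x hx
  exact hC x hx

/-- Commutation of the tangent-space projection tensor `P` with the covariance tensor `M` of
the noise `G(xxᵀ − A, W)`, for orthogonal `W`: `M = PMP` and `PM = MP`. -/
theorem projection_commutes_with_covariance {n : ℕ} (hn : 1 ≤ n) (M : ℝ) (hM : 0 < M)
    (ν : Measure (Fin n → ℝ)) [IsProbabilityMeasure ν]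
    (hsupp : ν {x | euclNorm x ≤ M} = 1)
    (A : Matrix (Fin n) (Fin n) ℝ) (hA : ∀ i j, A i j = ∫ x, x i * x j ∂ν)
    (W : Matrix (Fin n) (Fin n) ℝ) (h1 : Wᵀ * W = 1) (h2 : W * Wᵀ = 1)
    (Mten : Fin n → Fin n → Fin n → Fin n → ℝ)
    (hMten : ∀ i j k l, Mten i j k l =
      ∫ x, Gmat (outer x - A) W i j * Gmat (outer x - A) W k l ∂ν)
    (P : Fin n → Fin n → Fin n → Fin n → ℝ)
    (hP : ∀ i j k l, P i j k l =
      (1 / 2) * ((∑ s, W i s * W k s) * (if j = l then (1 : ℝ) else 0) - W k j * W i l)) :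
    (∀ i j k l,
      (∑ r, ∑ s, ∑ u, ∑ v, P i j r s * Mten r s u v * P u v k l) = Mten i j k l) ∧
    (∀ i j k l,
      (∑ r, ∑ s, P i j r s * Mten r s k l) = ∑ r, ∑ s, Mten i j r s * P r s k l) := by
  have hsym : ∀ x : Fin n → ℝ, (outer x - A)ᵀ = outer x - A := by
    intro x
    have hAs : Aᵀ = A := by
      ext i j
      rw [Matrix.transpose_apply, hA, hA]
      congr 1
      funext y
      ring
    ext i j
    have hA2 : A j i = A i j := by
      have := congrFun (congrFun hAs i) j
      simpa [Matrix.transpose_apply] using this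
    simp only [Matrix.transpose_apply, Matrix.sub_apply, outer, Matrix.of_apply]
    rw [mul_comm, hA2]
  have hint : ∀ a b c d : Fin n,
      Integrable (fun x => Gmat (outer x - A) W a b * Gmat (outer x - A) W c d) ν :=
    integG A W M hM ν hsupp
  have L1 : ∀ i j k l, ∑ r, ∑ s, P i j r s * Mten r s k l = Mten i j k l := by
    intro i j k l
    have e : ∀ r s : Fin n, P i j r s * Mten r s k l
        = ∫ x, P i j r s * (Gmat (outer x - A) W r s * Gmat (outer x - A) W k l) ∂ν := by
      intro r s
      rw [hMten, integral_const_mul]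
    calc ∑ r, ∑ s, P i j r s * Mten r s k l
        = ∑ r, ∑ s, ∫ x, P i j r s *
            (Gmat (outer x - A) W r s * Gmat (outer x - A) W k l) ∂ν :=
          Finset.sum_congr rfl fun r _ => Finset.sum_congr rfl fun s _ => e r s
      _ = ∑ r, ∫ x, ∑ s, P i j r s *
            (Gmat (outer x - A) W r s * Gmat (outer x - A) W k l) ∂ν := by
          refine Finset.sum_congr rfl fun r _ => ?_
          rw [← integral_finset_sum]
          intro s _
          exact (hint r s k l).const_mul _
      _ = ∫ x, ∑ r, ∑ s, P i j r s *
            (Gmat (outer x - A) W r s * Gmat (outer x - A) W k l) ∂ν := by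
          rw [← integral_finset_sum]
          intro r _
          exact integrable_finset_sum _ fun s _ => (hint r s k l).const_mul _
      _ = ∫ x, Gmat (outer x - A) W i j * Gmat (outer x - A) W k l ∂ν := by
          refine integral_congr_ae (Filter.Eventually.of_forall fun x => ?_)
          have h5 := alg1 (outer x - A) W h1 h2 (hsym x) i j
          calc ∑ r, ∑ s, P i j r s *
                (Gmat (outer x - A) W r s * Gmat (outer x - A) W k l)
              = (∑ r, ∑ s, P i j r s * Gmat (outer x - A) W r s) *
                  Gmat (outer x - A) W k l := by
                rw [Finset.sum_mul]
                exact Finset.sum_congr rfl fun r _ => by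
                  rw [Finset.sum_mul]
                  exact Finset.sum_congr rfl fun s _ => by ring
            _ = Gmat (outer x - A) W i j * Gmat (outer x - A) W k l := by
                rw [show (∑ r, ∑ s, P i j r s * Gmat (outer x - A) W r s)
                    = Gmat (outer x - A) W i j from by
                  rw [← h5]
                  exact Finset.sum_congr rfl fun r _ =>
                    Finset.sum_congr rfl fun s _ => by rw [hP]]
      _ = Mten i j k l := (hMten i j k l).symm
  have L2 : ∀ i j k l, ∑ r, ∑ s, Mten i j r s * P r s k l = Mten i j k l := by
    intro i j k l
    have e : ∀ r s : Fin n, Mten i j r s * P r s k l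
        = ∫ x, (Gmat (outer x - A) W i j * Gmat (outer x - A) W r s) * P r s k l ∂ν := by
      intro r s
      rw [hMten, integral_mul_const]
    calc ∑ r, ∑ s, Mten i j r s * P r s k l
        = ∑ r, ∑ s, ∫ x, (Gmat (outer x - A) W i j * Gmat (outer x - A) W r s) *
            P r s k l ∂ν :=
          Finset.sum_congr rfl fun r _ => Finset.sum_congr rfl fun s _ => e r s
      _ = ∑ r, ∫ x, ∑ s, (Gmat (outer x - A) W i j * Gmat (outer x - A) W r s) *
            P r s k l ∂ν := by
          refine Finset.sum_congr rfl fun r _ => ?_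
          rw [← integral_finset_sum]
          intro s _
          exact (hint i j r s).mul_const _
      _ = ∫ x, ∑ r, ∑ s, (Gmat (outer x - A) W i j * Gmat (outer x - A) W r s) *
            P r s k l ∂ν := by
          rw [← integral_finset_sum]
          intro r _
          exact integrable_finset_sum _ fun s _ => (hint i j r s).mul_const _
      _ = ∫ x, Gmat (outer x - A) W i j * Gmat (outer x - A) W k l ∂ν := by
          refine integral_congr_ae (Filter.Eventually.of_forall fun x => ?_)
          have h5 := alg2 (outer x - A) W h1 h2 (hsym x) k l
          calc ∑ r, ∑ s, (Gmat (outer x - A) W i j * Gmat (outer x - A) W r s) * P r s k l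
              = Gmat (outer x - A) W i j *
                  (∑ r, ∑ s, Gmat (outer x - A) W r s * P r s k l) := by
                rw [Finset.mul_sum]
                exact Finset.sum_congr rfl fun r _ => by
                  rw [Finset.mul_sum]
                  exact Finset.sum_congr rfl fun s _ => by ring
            _ = Gmat (outer x - A) W i j * Gmat (outer x - A) W k l := by
                rw [show (∑ r, ∑ s, Gmat (outer x - A) W r s * P r s k l)
                    = Gmat (outer x - A) W k l from by
                  rw [← h5]
                  exact Finset.sum_congr rfl fun r _ =>
                    Finset.sum_congr rfl fun s _ => by rw [hP]]
      _ = Mten i j k l := (hMten i j k l).symm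
  constructor
  · intro i j k l
    have inner : ∀ r s : Fin n, ∑ u, ∑ v, P i j r s * Mten r s u v * P u v k l
        = P i j r s * Mten r s k l := by
      intro r s
      calc ∑ u, ∑ v, P i j r s * Mten r s u v * P u v k l
          = P i j r s * ∑ u, ∑ v, Mten r s u v * P u v k l := by
            rw [Finset.mul_sum]
            exact Finset.sum_congr rfl fun u _ => by
              rw [Finset.mul_sum]
              exact Finset.sum_congr rfl fun v _ => by ring
        _ = P i j r s * Mten r s k l := by rw [L2]
    calc ∑ r, ∑ s, ∑ u, ∑ v, P i j r s * Mten r s u v * P u v k l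
        = ∑ r, ∑ s, P i j r s * Mten r s k l :=
          Finset.sum_congr rfl fun r _ => Finset.sum_congr rfl fun s _ => inner r s
      _ = Mten i j k l := L1 i j k l
  · intro i j k l
    rw [L1, L2]
end

section
/- (First-order consistency of the SGA semigroup.) Let n ≥ 1, M > 0, let ν be a probability measure on ℝⁿ supported in { x : ‖x‖₂ ≤ M }, and set A := ∫ xxᵀ dν(x). Let ψ : ℝ^{n×n} → ℝ be a C² function with bounded derivatives up to order 2, and for η > 0 define Sψ(W) := ∫ ψ( W + η G(xxᵀ, W) ) dν(x). Then there exist η₀ > 0 and C > 0, depending only on n, M, and the C² norm of ψ, such that for all 0 < η ≤ η₀ and all W ∈ ℝ^{n×n} with WᵀW = I: | Sψ(W) − ψ(W) − η Σ_{i,j} G(A,W)_{ij} (∂ψ/∂w_{ij})(W) | ≤ C η². -/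
open Matrix

open MeasureTheory

attribute [local instance] Matrix.frobeniusNormedAddCommGroup Matrix.frobeniusNormedSpace

section AuxLemmas

lemma norm_fderiv_eq_iteratedFDeriv_one {E F : Type*} [NormedAddCommGroup E] [NormedSpace ℝ E]
    [NormedAddCommGroup F] [NormedSpace ℝ F] (g : E → F) (x : E) :
    ‖fderiv ℝ g x‖ = ‖iteratedFDeriv ℝ 1 g x‖ := by
  have h := norm_iteratedFDeriv_fderiv (𝕜 := ℝ) (f := g) (n := 0) (x := x)
  rw [norm_iteratedFDeriv_zero] at h
  simpa using h

lemma taylor2 {E : Type*} [NormedAddCommGroup E] [NormedSpace ℝ E]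
    (f : E → ℝ) (hf : ContDiff ℝ 2 f) (K : ℝ)
    (hK2 : ∀ x, ‖iteratedFDeriv ℝ 2 f x‖ ≤ K) (w h : E) :
    |f (w + h) - f w - fderiv ℝ f w h| ≤ K * ‖h‖ ^ 2 := by
  have hK0 : 0 ≤ K := le_trans (norm_nonneg _) (hK2 w)
  have hd1 : Differentiable ℝ f := hf.differentiable two_ne_zero
  have hd2 : Differentiable ℝ (fderiv ℝ f) :=
    (hf.fderiv_right (m := 1) (by norm_num)).differentiable one_ne_zero
  have hlip : ∀ a b : E, ‖fderiv ℝ f a - fderiv ℝ f b‖ ≤ K * ‖a - b‖ := by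
    intro a b
    refine Convex.norm_image_sub_le_of_norm_fderiv_le (fun x _ => hd2 x)
      (fun x _ => ?_) convex_univ (Set.mem_univ b) (Set.mem_univ a)
    rw [norm_fderiv_eq_iteratedFDeriv_one]
    have h := norm_iteratedFDeriv_fderiv (𝕜 := ℝ) (f := f) (n := 1) (x := x)
    rw [h]; simpa using hK2 x
  set g : E → ℝ := fun u => f (w + u) - fderiv ℝ f w u with hg
  have hg' : ∀ u : E, HasFDerivAt g (fderiv ℝ f (w + u) - fderiv ℝ f w) u := by
    intro u
    have h1 : HasFDerivAt (fun u : E => f (w + u)) (fderiv ℝ f (w + u)) u := by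
      have hin : HasFDerivAt (fun u : E => w + u) (ContinuousLinearMap.id ℝ E) u :=
        (hasFDerivAt_id u).const_add w
      exact ((hd1 (w + u)).hasFDerivAt.comp u hin).congr_fderiv (by simp)
    exact h1.sub ((fderiv ℝ f w).hasFDerivAt)
  have key : ‖g h - g 0‖ ≤ (K * ‖h‖) * ‖h - 0‖ := by
    refine Convex.norm_image_sub_le_of_norm_fderiv_le (s := Metric.closedBall 0 ‖h‖)
      (fun u _ => (hg' u).differentiableAt) (fun u hu => ?_) (convex_closedBall _ _)
      (by simpa using norm_nonneg h) (by simp)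
    rw [(hg' u).fderiv]
    calc ‖fderiv ℝ f (w + u) - fderiv ℝ f w‖ ≤ K * ‖(w + u) - w‖ := hlip _ _
      _ = K * ‖u‖ := by rw [add_sub_cancel_left]
      _ ≤ K * ‖h‖ := by
          have : ‖u‖ ≤ ‖h‖ := by simpa using hu
          exact mul_le_mul_of_nonneg_left this hK0
  have hg0 : g 0 = f w := by simp [hg]
  have hgh : g h = f (w + h) - fderiv ℝ f w h := rfl
  rw [hg0, hgh, sub_zero] at key
  calc |f (w + h) - f w - fderiv ℝ f w h|
      = ‖f (w + h) - fderiv ℝ f w h - f w‖ := by rw [Real.norm_eq_abs]; ring_nf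
    _ ≤ (K * ‖h‖) * ‖h‖ := key
    _ = K * ‖h‖ ^ 2 := by ring

lemma sigmaMat_norm_le {n : ℕ} (Λ Q : Matrix (Fin n) (Fin n) ℝ) :
    ‖sigmaMat Λ Q‖ ≤ ‖Qᵀ * Λ * Q‖ := by
  rw [Matrix.frobenius_norm_def, Matrix.frobenius_norm_def]
  apply Real.rpow_le_rpow (by positivity) _ (by norm_num)
  refine Finset.sum_le_sum fun j _ => Finset.sum_le_sum fun k _ => ?_
  apply Real.rpow_le_rpow (norm_nonneg _) _ (by norm_num)
  simp only [sigmaMat, Matrix.of_apply]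
  split_ifs <;> simp [norm_neg]

lemma orth_norm {n : ℕ} (W : Matrix (Fin n) (Fin n) ℝ) (hW : Wᵀ * W = 1) :
    ‖W‖ = Real.sqrt n := by
  have htr : ∑ j, ∑ i, W i j * W i j = (n : ℝ) := by
    have h := congrArg Matrix.trace hW
    rw [Matrix.trace_one] at h
    simpa [Matrix.trace, Matrix.diag, Matrix.mul_apply, Matrix.transpose_apply] using h
  rw [Matrix.frobenius_norm_def, Real.sqrt_eq_rpow]
  congr 1
  have : ∀ i j : Fin n, ‖W i j‖ ^ (2 : ℝ) = W i j * W i j := by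
    intro i j
    rw [show (2:ℝ) = ((2:ℕ):ℝ) by norm_num, Real.rpow_natCast, Real.norm_eq_abs, sq_abs, sq]
  simp_rw [this]
  rw [Finset.sum_comm, htr]

lemma outer_norm {n : ℕ} (x : Fin n → ℝ) (M : ℝ) (hx : euclNorm x ≤ M) :
    ‖(outer x : Matrix (Fin n) (Fin n) ℝ)‖ ≤ M ^ 2 := by
  have hs0 : 0 ≤ ∑ i, x i ^ 2 := Finset.sum_nonneg fun i _ => sq_nonneg _
  have hM0 : 0 ≤ M := le_trans (Real.sqrt_nonneg _) hx
  have hx' : Real.sqrt (∑ i, x i ^ 2) ≤ M := hx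
  have hsum : ∑ i, x i ^ 2 ≤ M ^ 2 := by
    nlinarith [Real.sq_sqrt hs0, Real.sqrt_nonneg (∑ i, x i ^ 2)]
  rw [Matrix.frobenius_norm_def]
  have hentry : ∀ i j : Fin n, ‖(outer x : Matrix (Fin n) (Fin n) ℝ) i j‖ ^ (2:ℝ)
      = x i ^2 * (x j ^2) := by
    intro i j
    rw [show (2:ℝ) = ((2:ℕ):ℝ) by norm_num, Real.rpow_natCast, Real.norm_eq_abs, sq_abs]
    simp [outer]; ring
  simp_rw [hentry, ← Finset.mul_sum, ← Finset.sum_mul]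
  rw [show (∑ i, x i ^ 2) * (∑ j, x j ^ 2) = (∑ i, x i ^2)^2 by ring]
  calc ((∑ i, x i ^ 2) ^ 2) ^ (1/2 : ℝ) = ∑ i, x i ^ 2 := by
        rw [show ((∑ i, x i ^ 2) ^ 2 : ℝ) = (∑ i, x i ^ 2) ^ ((2:ℕ):ℝ) by rw [Real.rpow_natCast],
          ← Real.rpow_mul hs0]
        norm_num
    _ ≤ M ^ 2 := hsum

lemma Gmat_norm_le {n : ℕ} (Λ W : Matrix (Fin n) (Fin n) ℝ) :
    ‖Gmat Λ W‖ ≤ (‖W‖ + ‖W‖^3 + ‖W‖^3) * ‖Λ‖ := by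
  have hT : ‖Wᵀ‖ = ‖W‖ := Matrix.frobenius_norm_transpose W
  have h1 : ‖Λ * W‖ ≤ ‖Λ‖ * ‖W‖ := Matrix.frobenius_norm_mul _ _
  have h2 : ‖W * Wᵀ * Λ * W‖ ≤ ‖W‖ * ‖W‖ * ‖Λ‖ * ‖W‖ := by
    calc ‖W * Wᵀ * Λ * W‖ ≤ ‖W * Wᵀ * Λ‖ * ‖W‖ := Matrix.frobenius_norm_mul _ _
      _ ≤ (‖W * Wᵀ‖ * ‖Λ‖) * ‖W‖ := by
          gcongr
          exact Matrix.frobenius_norm_mul (W * Wᵀ) Λ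
      _ ≤ ‖W‖ * ‖W‖ * ‖Λ‖ * ‖W‖ := by
          gcongr
          have := Matrix.frobenius_norm_mul W Wᵀ
          rw [hT] at this; exact this
  have h3 : ‖W * sigmaMat Λ W‖ ≤ ‖W‖ * (‖W‖ * ‖Λ‖ * ‖W‖) := by
    calc ‖W * sigmaMat Λ W‖ ≤ ‖W‖ * ‖sigmaMat Λ W‖ := Matrix.frobenius_norm_mul _ _
      _ ≤ ‖W‖ * (‖W‖ * ‖Λ‖ * ‖W‖) := by
          have hs := sigmaMat_norm_le Λ W
          have hs2 : ‖Wᵀ * Λ * W‖ ≤ ‖W‖ * ‖Λ‖ * ‖W‖ := by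
            calc ‖Wᵀ * Λ * W‖ ≤ ‖Wᵀ * Λ‖ * ‖W‖ := Matrix.frobenius_norm_mul _ _
              _ ≤ ‖W‖ * ‖Λ‖ * ‖W‖ := by
                  gcongr
                  have := Matrix.frobenius_norm_mul Wᵀ Λ
                  rw [hT] at this; exact this
          gcongr
          exact hs.trans hs2
  calc ‖Gmat Λ W‖ ≤ ‖Λ * W‖ + ‖W * Wᵀ * Λ * W‖ + ‖W * sigmaMat Λ W‖ := by
        unfold Gmat
        calc ‖Λ * W - W * Wᵀ * Λ * W + W * sigmaMat Λ W‖
            ≤ ‖Λ * W - W * Wᵀ * Λ * W‖ + ‖W * sigmaMat Λ W‖ := norm_add_le _ _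
          _ ≤ ‖Λ * W‖ + ‖W * Wᵀ * Λ * W‖ + ‖W * sigmaMat Λ W‖ := by
              have := norm_sub_le (Λ * W) (W * Wᵀ * Λ * W); linarith
    _ ≤ (‖W‖ + ‖W‖^3 + ‖W‖^3) * ‖Λ‖ := by nlinarith [norm_nonneg W, norm_nonneg Λ]

lemma sigmaMat_add {n : ℕ} (Λ₁ Λ₂ Q : Matrix (Fin n) (Fin n) ℝ) :
    sigmaMat (Λ₁ + Λ₂) Q = sigmaMat Λ₁ Q + sigmaMat Λ₂ Q := by
  ext j k
  simp only [sigmaMat, Matrix.mul_add, Matrix.add_mul, Matrix.add_apply, Matrix.of_apply]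
  split_ifs <;> ring

lemma sigmaMat_smul {n : ℕ} (c : ℝ) (Λ Q : Matrix (Fin n) (Fin n) ℝ) :
    sigmaMat (c • Λ) Q = c • sigmaMat Λ Q := by
  ext j k
  simp only [sigmaMat, Matrix.mul_smul, Matrix.smul_mul, Matrix.smul_apply, Matrix.of_apply,
    smul_eq_mul]
  split_ifs <;> ring

/-- `Gmat` as a linear map in its first argument. -/
noncomputable def GLin {n : ℕ} (W : Matrix (Fin n) (Fin n) ℝ) :
    Matrix (Fin n) (Fin n) ℝ →ₗ[ℝ] Matrix (Fin n) (Fin n) ℝ where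
  toFun Λ := Gmat Λ W
  map_add' Λ₁ Λ₂ := by
    simp only [Gmat, sigmaMat_add, Matrix.add_mul, Matrix.mul_add]
    abel
  map_smul' c Λ := by
    simp only [Gmat, sigmaMat_smul, Matrix.smul_mul, Matrix.mul_smul, RingHom.id_apply,
      smul_sub, smul_add]

lemma lin_expand {n : ℕ} (φ : Matrix (Fin n) (Fin n) ℝ →ₗ[ℝ] ℝ) (Λ : Matrix (Fin n) (Fin n) ℝ) :
    φ Λ = ∑ a, ∑ b, Λ a b * φ (Matrix.single a b 1) := by
  conv_lhs => rw [Matrix.matrix_eq_sum_single Λ]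
  rw [map_sum]
  refine Finset.sum_congr rfl fun a _ => ?_
  rw [map_sum]
  refine Finset.sum_congr rfl fun b _ => ?_
  rw [show Matrix.single a b (Λ a b) = (Λ a b) • Matrix.single a b 1 by
      rw [Matrix.smul_single]; simp,
    _root_.map_smul, smul_eq_mul]

/-- `Gmat` as a continuous linear map in its first argument. -/
noncomputable def GCLM {n : ℕ} (W : Matrix (Fin n) (Fin n) ℝ) :
    Matrix (Fin n) (Fin n) ℝ →L[ℝ] Matrix (Fin n) (Fin n) ℝ :=
  LinearMap.toContinuousLinearMap (GLin W)

end AuxLemmas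

set_option maxHeartbeats 1000000 in
/-- First-order consistency of the SGA semigroup: for `C²` test functions `ψ` with bounded
derivatives up to order 2, `|Sψ(W) − ψ(W) − η Σ_{ij} G(A,W)_{ij} ∂ψ/∂w_{ij}(W)| ≤ Cη²`
uniformly over orthogonal `W` and `0 < η ≤ η₀`. -/
theorem sga_first_order_consistency {n : ℕ} (hn : 1 ≤ n) (M : ℝ) (hM : 0 < M)
    (ν : Measure (Fin n → ℝ)) [IsProbabilityMeasure ν]
    (hsupp : ν {x | euclNorm x ≤ M} = 1)
    (A : Matrix (Fin n) (Fin n) ℝ) (hA : ∀ i j, A i j = ∫ x, x i * x j ∂ν)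
    (ψ : Matrix (Fin n) (Fin n) ℝ → ℝ) (hψ : ContDiff ℝ 2 ψ)
    (hbdd : ∃ K : ℝ, ∀ W : Matrix (Fin n) (Fin n) ℝ, ∀ i : ℕ, i ≤ 2 →
      ‖iteratedFDeriv ℝ i ψ W‖ ≤ K) :
    ∃ η₀ > 0, ∃ C > 0, ∀ η : ℝ, 0 < η → η ≤ η₀ →
      ∀ W : Matrix (Fin n) (Fin n) ℝ, Wᵀ * W = 1 →
        |(∫ x, ψ (W + η • Gmat (outer x) W) ∂ν) - ψ W -
            η * ∑ i, ∑ j, Gmat A W i j * fderiv ℝ ψ W (Matrix.single i j 1)| ≤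
          C * η ^ 2 := by
  obtain ⟨K, hK⟩ := hbdd
  have hK0 : 0 ≤ K := le_trans (norm_nonneg _) (hK 0 0 (by norm_num))
  set b : ℝ := Real.sqrt n with hb
  have hb0 : 0 ≤ b := Real.sqrt_nonneg _
  set B : ℝ := (b + b ^ 3 + b ^ 3) * M ^ 2 with hBdef
  have hB0 : 0 ≤ B := by positivity
  refine ⟨1, one_pos, K * B ^ 2 + 1, by positivity, ?_⟩
  intro η hη hη1 W hW
  -- a.e. support
  have hcontN : Continuous (fun x : Fin n → ℝ => euclNorm x) := by
    unfold euclNorm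
    exact Real.continuous_sqrt.comp (continuous_finset_sum _ fun i _ => (continuous_apply i).pow 2)
  have hmeasS : MeasurableSet {x : Fin n → ℝ | euclNorm x ≤ M} :=
    (isClosed_le hcontN continuous_const).measurableSet
  have hae : ∀ᵐ x ∂ν, euclNorm x ≤ M := by
    rw [ae_iff]
    have hc : {x : Fin n → ℝ | ¬ euclNorm x ≤ M} = {x : Fin n → ℝ | euclNorm x ≤ M}ᶜ := rfl
    rw [hc, measure_compl hmeasS (measure_ne_top _ _), hsupp, measure_univ, tsub_self]
  -- norm bounds
  have hWn : ‖W‖ = b := orth_norm W hW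
  have hGx : ∀ x : Fin n → ℝ, euclNorm x ≤ M → ‖Gmat (outer x) W‖ ≤ B := by
    intro x hx
    calc ‖Gmat (outer x) W‖ ≤ (‖W‖ + ‖W‖ ^ 3 + ‖W‖ ^ 3) * ‖outer x‖ := Gmat_norm_le _ _
      _ ≤ (b + b ^ 3 + b ^ 3) * M ^ 2 := by
          rw [hWn]
          exact mul_le_mul_of_nonneg_left (outer_norm x M hx) (by positivity)
  set L := fderiv ℝ ψ W with hL
  have hLK := (norm_fderiv_eq_iteratedFDeriv_one ψ W).trans_le (hK W 1 (by norm_num))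
  set φ : Matrix (Fin n) (Fin n) ℝ →ₗ[ℝ] ℝ := L.toLinearMap.comp (GLin W) with hφ
  have hφdef : ∀ Λ, φ Λ = L (Gmat Λ W) := fun Λ => rfl
  -- pointwise Taylor estimate on the support
  have htay : ∀ x : Fin n → ℝ, euclNorm x ≤ M →
      |ψ (W + η • Gmat (outer x) W) - ψ W - L (η • Gmat (outer x) W)| ≤ K * B ^ 2 * η ^ 2 := by
    intro x hx
    have h0 := taylor2 ψ hψ K (fun z => hK z 2 le_rfl) W (η • Gmat (outer x) W)
    change |ψ (W + η • Gmat (outer x) W) - ψ W - L (η • Gmat (outer x) W)| ≤ K * ‖η • Gmat (outer x) W‖ ^ 2 at h0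
    refine h0.trans ?_
    rw [norm_smul, Real.norm_eq_abs, abs_of_pos hη]
    have hg := hGx x hx
    have hgn : 0 ≤ ‖Gmat (outer x) W‖ := norm_nonneg _
    have hg2 : ‖Gmat (outer x) W‖ ^ 2 ≤ B ^ 2 := by nlinarith
    calc K * (η * ‖Gmat (outer x) W‖) ^ 2 = (K * ‖Gmat (outer x) W‖ ^ 2) * η ^ 2 := by ring
      _ ≤ (K * B ^ 2) * η ^ 2 :=
          mul_le_mul_of_nonneg_right (mul_le_mul_of_nonneg_left hg2 hK0) (sq_nonneg η)
      _ = K * B ^ 2 * η ^ 2 := by ring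
  -- continuity and integrability
  have houter : Continuous (fun x : Fin n → ℝ => outer x) := by
    apply continuous_pi; intro i; apply continuous_pi; intro j
    exact (continuous_apply i).mul (continuous_apply j)
  have hGcont : Continuous (fun x : Fin n → ℝ => Gmat (outer x) W) := by
    have h : Continuous fun x : Fin n → ℝ => GCLM W (outer x) :=
      (GCLM W).continuous.comp houter
    have h2 : (fun x : Fin n → ℝ => GCLM W (outer x)) = fun x => Gmat (outer x) W := by
      funext x
      exact congrFun (LinearMap.coe_toContinuousLinearMap' (GLin W)) (outer x)
    exact h2 ▸ h
  have hcont1 : Continuous (fun x : Fin n → ℝ => ψ (W + η • Gmat (outer x) W)) :=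
    hψ.continuous.comp (continuous_const.add (hGcont.const_smul η))
  have hint1 : Integrable (fun x : Fin n → ℝ => ψ (W + η • Gmat (outer x) W)) ν := by
    refine Integrable.mono' (integrable_const (|ψ W| + K * B + K * B ^ 2 * η ^ 2))
      hcont1.aestronglyMeasurable ?_
    filter_upwards [hae] with x hx
    have h1 := htay x hx
    have h2 : |L (η • Gmat (outer x) W)| ≤ K * B := by
      calc |L (η • Gmat (outer x) W)| ≤ K * ‖η • Gmat (outer x) W‖ := by
            have h := (fderiv ℝ ψ W).le_of_opNorm_le hLK (η • Gmat (outer x) W)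
            rw [Real.norm_eq_abs] at h
            exact h
        _ = K * (η * ‖Gmat (outer x) W‖) := by
            rw [norm_smul, Real.norm_eq_abs, abs_of_pos hη]
        _ ≤ K * B := by
            have hg := hGx x hx
            have hgn : 0 ≤ ‖Gmat (outer x) W‖ := norm_nonneg _
            have h3 : η * ‖Gmat (outer x) W‖ ≤ B :=
              le_trans (by nlinarith) hg
            exact mul_le_mul_of_nonneg_left h3 hK0
    have heq : ψ (W + η • Gmat (outer x) W) = ψ W + L (η • Gmat (outer x) W) +
        (ψ (W + η • Gmat (outer x) W) - ψ W - L (η • Gmat (outer x) W)) := by ring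
    rw [Real.norm_eq_abs, heq]
    calc |ψ W + L (η • Gmat (outer x) W) +
          (ψ (W + η • Gmat (outer x) W) - ψ W - L (η • Gmat (outer x) W))|
        ≤ |ψ W + L (η • Gmat (outer x) W)| +
          |ψ (W + η • Gmat (outer x) W) - ψ W - L (η • Gmat (outer x) W)| := abs_add_le _ _
      _ ≤ (|ψ W| + |L (η • Gmat (outer x) W)|) +
          |ψ (W + η • Gmat (outer x) W) - ψ W - L (η • Gmat (outer x) W)| :=
          add_le_add_left (abs_add_le _ _) _
      _ ≤ |ψ W| + K * B + K * B ^ 2 * η ^ 2 := by linarith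
  have hcoord_le : ∀ (x : Fin n → ℝ) (a : Fin n), |x a| ≤ euclNorm x := by
    intro x a
    have h1 : x a ^ 2 ≤ ∑ i, x i ^ 2 :=
      Finset.single_le_sum (fun i _ => sq_nonneg (x i)) (Finset.mem_univ a)
    have h2 := Real.sqrt_le_sqrt h1
    rwa [Real.sqrt_sq_eq_abs] at h2
  have hcoord : ∀ a c : Fin n, Integrable (fun x : Fin n → ℝ => x a * x c) ν := by
    intro a c
    refine Integrable.mono' (integrable_const (M * M))
      (((continuous_apply a).mul (continuous_apply c)).aestronglyMeasurable) ?_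
    filter_upwards [hae] with x hx
    have ha := (hcoord_le x a).trans hx
    have hc := (hcoord_le x c).trans hx
    rw [Real.norm_eq_abs, abs_mul]
    exact mul_le_mul ha hc (abs_nonneg _) hM.le
  have hφexp : ∀ x : Fin n → ℝ,
      φ (outer x) = ∑ a, ∑ c, x a * x c * φ (Matrix.single a c 1) := by
    intro x
    exact lin_expand φ (outer x)
  have hint2 : Integrable (fun x : Fin n → ℝ => φ (outer x)) ν := by
    have h1 : (fun x : Fin n → ℝ => φ (outer x)) =
        fun x => ∑ a, ∑ c, x a * x c * φ (Matrix.single a c 1) := funext hφexp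
    rw [h1]
    exact integrable_finset_sum _ fun a _ =>
      integrable_finset_sum _ fun c _ => (hcoord a c).mul_const _
  -- the integral of the linear term
  have key : ∫ x, φ (outer x) ∂ν
      = ∑ i, ∑ j, Gmat A W i j * L (Matrix.single i j 1) := by
    calc ∫ x, φ (outer x) ∂ν
        = ∫ x, ∑ a, ∑ c, x a * x c * φ (Matrix.single a c 1) ∂ν := by
          simp_rw [hφexp]
      _ = ∑ a, ∑ c, ∫ x, x a * x c * φ (Matrix.single a c 1) ∂ν := by
          rw [integral_finset_sum _ fun a _ =>
            integrable_finset_sum _ fun c _ => (hcoord a c).mul_const _]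
          exact Finset.sum_congr rfl fun a _ =>
            integral_finset_sum _ fun c _ => (hcoord a c).mul_const _
      _ = ∑ a, ∑ c, A a c * φ (Matrix.single a c 1) := by
          refine Finset.sum_congr rfl fun a _ => Finset.sum_congr rfl fun c _ => ?_
          rw [integral_mul_const, ← hA]
      _ = φ A := (lin_expand φ A).symm
      _ = L (Gmat A W) := rfl
      _ = ∑ i, ∑ j, Gmat A W i j * L (Matrix.single i j 1) :=
          lin_expand L.toLinearMap (Gmat A W)
  -- split the integral
  have hsplit : (∫ x, ψ (W + η • Gmat (outer x) W) ∂ν) - ψ W -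
      η * ∑ i, ∑ j, Gmat A W i j * L (Matrix.single i j 1)
      = ∫ x, (ψ (W + η • Gmat (outer x) W) - ψ W - η * φ (outer x)) ∂ν := by
    have hfm : Integrable (fun x : Fin n → ℝ => ψ (W + η • Gmat (outer x) W) - ψ W) ν :=
      hint1.sub (integrable_const (ψ W))
    have hgm : Integrable (fun x : Fin n → ℝ => η * φ (outer x)) ν := hint2.const_mul η
    rw [integral_sub hfm hgm, integral_sub hint1 (integrable_const (ψ W)),
      integral_const, integral_const_mul, key]
    simp [measure_univ]
  rw [hsplit]
  have hbound : |∫ x, (ψ (W + η • Gmat (outer x) W) - ψ W - η * φ (outer x)) ∂ν|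
      ≤ K * B ^ 2 * η ^ 2 := by
    have := norm_integral_le_of_norm_le (μ := ν) (f := fun x : Fin n → ℝ =>
        ψ (W + η • Gmat (outer x) W) - ψ W - η * φ (outer x))
      (integrable_const (K * B ^ 2 * η ^ 2)) ?_
    · rw [Real.norm_eq_abs] at this
      refine this.trans ?_
      rw [integral_const]
      simp [measure_univ]
    · filter_upwards [hae] with x hx
      rw [Real.norm_eq_abs]
      have h2 : η * φ (outer x) = L (η • Gmat (outer x) W) := by
        rw [hφdef, ← smul_eq_mul, ← L.map_smul]
      rw [h2]
      exact htay x hx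
  refine hbound.trans ?_
  nlinarith [sq_nonneg η]
end

section
/- (Explicit invariant measure for the uniform-distribution example.) Let η > 0. Then for every x ∈ [0, 2π): exp( (1/η) ∫₀^x ( −45 cos s sin s + 16η ( cos³ s sin s − sin³ s cos s ) ) / ( 10 − 16 cos² s sin² s ) ds ) = exp( −(15√6/(16η)) arctan( 2√6 sin² x / ( 5 − 4 sin² x ) ) ) · √( 5 / ( 8 sin⁴ x − 8 sin² x + 5 ) ). -/
open Real


lemma Qpos (x : ℝ) : 0 < 8 * Real.sin x ^ 4 - 8 * Real.sin x ^ 2 + 5 := by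
  nlinarith [sq_nonneg (2 * Real.sin x ^ 2 - 1)]

lemma Dpos (x : ℝ) : 0 < 5 - 4 * Real.sin x ^ 2 := by
  nlinarith [Real.sin_sq_le_one x]

lemma denpos (x : ℝ) : 0 < 10 - 16 * Real.cos x ^ 2 * Real.sin x ^ 2 := by
  nlinarith [sq_nonneg (Real.cos x ^ 2 - Real.sin x ^ 2), Real.sin_sq_add_cos_sq x]

lemma key (η x : ℝ) :
    HasDerivAt (fun y => -(15 * Real.sqrt 6 / 16) *
        Real.arctan (2 * Real.sqrt 6 * Real.sin y ^ 2 / (5 - 4 * Real.sin y ^ 2))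
      + (η / 2) * Real.log (5 / (8 * Real.sin y ^ 4 - 8 * Real.sin y ^ 2 + 5)))
      ((-45 * Real.cos x * Real.sin x
          + 16 * η * (Real.cos x ^ 3 * Real.sin x - Real.sin x ^ 3 * Real.cos x))
        / (10 - 16 * Real.cos x ^ 2 * Real.sin x ^ 2)) x := by
  have hs : HasDerivAt Real.sin (Real.cos x) x := Real.hasDerivAt_sin x
  have hs2 : HasDerivAt (fun y => Real.sin y ^ 2) (2 * Real.sin x * Real.cos x) x := by
    simpa using hs.fun_pow 2
  have hs4 : HasDerivAt (fun y => Real.sin y ^ 4) (4 * Real.sin x ^ 3 * Real.cos x) x := by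
    simpa using hs.fun_pow 4
  have hDne : (5 - 4 * Real.sin x ^ 2) ≠ 0 := ne_of_gt (Dpos x)
  have hQne : (8 * Real.sin x ^ 4 - 8 * Real.sin x ^ 2 + 5) ≠ 0 := ne_of_gt (Qpos x)
  have h6 : Real.sqrt 6 ^ 2 = 6 := Real.sq_sqrt (by norm_num)
  have hpy : Real.cos x ^ 2 = 1 - Real.sin x ^ 2 := by
    nlinarith [Real.sin_sq_add_cos_sq x]
  have hN : HasDerivAt (fun y => 2 * Real.sqrt 6 * Real.sin y ^ 2)
      (2 * Real.sqrt 6 * (2 * Real.sin x * Real.cos x)) x := hs2.const_mul _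
  have hD : HasDerivAt (fun y => 5 - 4 * Real.sin y ^ 2)
      (-(4 * (2 * Real.sin x * Real.cos x))) x := by
    simpa using (hs2.const_mul (4:ℝ)).const_sub 5
  have hu : HasDerivAt (fun y => 2 * Real.sqrt 6 * Real.sin y ^ 2 / (5 - 4 * Real.sin y ^ 2))
      (20 * Real.sqrt 6 * Real.sin x * Real.cos x / (5 - 4 * Real.sin x ^ 2) ^ 2) x := by
    refine (hN.fun_div hD hDne).congr_deriv ?_
    field_simp
    ring
  have ha : HasDerivAt
      (fun y => Real.arctan (2 * Real.sqrt 6 * Real.sin y ^ 2 / (5 - 4 * Real.sin y ^ 2)))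
      (4 * Real.sqrt 6 * Real.sin x * Real.cos x
        / (8 * Real.sin x ^ 4 - 8 * Real.sin x ^ 2 + 5)) x := by
    convert hu.arctan using 1
    have hone : (1 + (2 * Real.sqrt 6 * Real.sin x ^ 2 / (5 - 4 * Real.sin x ^ 2)) ^ 2) =
        5 * (8 * Real.sin x ^ 4 - 8 * Real.sin x ^ 2 + 5) / (5 - 4 * Real.sin x ^ 2) ^ 2 := by
      rw [div_pow, one_add_div (pow_ne_zero 2 hDne)]
      congr 1
      linear_combination ((4:ℝ) * Real.sin x ^ 4) * h6
    rw [hone]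
    field_simp
    ring_nf
  have hQ : HasDerivAt (fun y => 8 * Real.sin y ^ 4 - 8 * Real.sin y ^ 2 + 5)
      (8 * (4 * Real.sin x ^ 3 * Real.cos x) - 8 * (2 * Real.sin x * Real.cos x)) x := by
    simpa using ((hs4.const_mul (8:ℝ)).sub (hs2.const_mul (8:ℝ))).add_const 5
  have h5Q := (hasDerivAt_const x (5:ℝ)).fun_div hQ hQne
  have h5Qne : (5 / (8 * Real.sin x ^ 4 - 8 * Real.sin x ^ 2 + 5)) ≠ 0 := by positivity
  have hlog : HasDerivAt (fun y => (η / 2) * Real.log (5 / (8 * Real.sin y ^ 4 - 8 * Real.sin y ^ 2 + 5)))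
      (η / 2 * ((16 * Real.sin x * Real.cos x - 32 * Real.sin x ^ 3 * Real.cos x)
        / (8 * Real.sin x ^ 4 - 8 * Real.sin x ^ 2 + 5))) x := by
    refine ((h5Q.log h5Qne).const_mul (η / 2)).congr_deriv ?_
    field_simp
    ring
  have htot := (ha.const_mul (-(15 * Real.sqrt 6 / 16))).fun_add hlog
  refine htot.congr_deriv ?_
  have hden : (10 - 16 * Real.cos x ^ 2 * Real.sin x ^ 2) ≠ 0 := ne_of_gt (denpos x)
  have hden2 : 10 - 16 * Real.cos x ^ 2 * Real.sin x ^ 2 = 2 * (8 * Real.sin x ^ 4 - 8 * Real.sin x ^ 2 + 5) := by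
    rw [hpy]; ring
  have hc3 : Real.cos x ^ 3 = Real.cos x * (1 - Real.sin x ^ 2) := by
    rw [← hpy]; ring
  rw [hden2, hc3]
  field_simp
  ring_nf
  rw [h6]
  ring

/-- Explicit invariant measure for the uniform-distribution example: closed-form evaluation of
`exp((1/η)∫₀ˣ (−45 cos s sin s + 16η(cos³s sin s − sin³s cos s))/(10 − 16cos²s sin²s) ds)`. -/
theorem explicit_invariant_measure_example (η : ℝ) (hη : 0 < η) :
    ∀ x : ℝ, 0 ≤ x → x < 2 * π →
      Real.exp ((1 / η) * ∫ s in (0 : ℝ)..x,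
          (-45 * Real.cos s * Real.sin s
              + 16 * η * ((Real.cos s) ^ 3 * Real.sin s - (Real.sin s) ^ 3 * Real.cos s))
            / (10 - 16 * (Real.cos s) ^ 2 * (Real.sin s) ^ 2)) =
      Real.exp (-(15 * Real.sqrt 6 / (16 * η)) *
            Real.arctan (2 * Real.sqrt 6 * (Real.sin x) ^ 2 / (5 - 4 * (Real.sin x) ^ 2))) *
        Real.sqrt (5 / (8 * (Real.sin x) ^ 4 - 8 * (Real.sin x) ^ 2 + 5)) := by
  intro x _ _
  have hint : IntervalIntegrable (fun s =>
      (-45 * Real.cos s * Real.sin s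
          + 16 * η * ((Real.cos s) ^ 3 * Real.sin s - (Real.sin s) ^ 3 * Real.cos s))
        / (10 - 16 * (Real.cos s) ^ 2 * (Real.sin s) ^ 2)) MeasureTheory.volume 0 x := by
    apply Continuous.intervalIntegrable
    apply Continuous.div (by continuity) (by continuity)
    exact fun s => ne_of_gt (denpos s)
  rw [intervalIntegral.integral_eq_sub_of_hasDerivAt (fun s _ => key η s) hint]
  have hQp : (0:ℝ) < 8 * Real.sin x ^ 4 - 8 * Real.sin x ^ 2 + 5 := Qpos x
  have h5Qp : (0:ℝ) < 5 / (8 * Real.sin x ^ 4 - 8 * Real.sin x ^ 2 + 5) := by positivity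
  have h0 : -(15 * Real.sqrt 6 / 16) *
        Real.arctan (2 * Real.sqrt 6 * Real.sin (0:ℝ) ^ 2 / (5 - 4 * Real.sin (0:ℝ) ^ 2))
      + (η / 2) * Real.log (5 / (8 * Real.sin (0:ℝ) ^ 4 - 8 * Real.sin (0:ℝ) ^ 2 + 5)) = 0 := by
    simp
  rw [h0, sub_zero]
  have e1 : (1 / η) * (-(15 * Real.sqrt 6 / 16) *
        Real.arctan (2 * Real.sqrt 6 * Real.sin x ^ 2 / (5 - 4 * Real.sin x ^ 2))
      + (η / 2) * Real.log (5 / (8 * Real.sin x ^ 4 - 8 * Real.sin x ^ 2 + 5))) =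
      -(15 * Real.sqrt 6 / (16 * η)) *
        Real.arctan (2 * Real.sqrt 6 * Real.sin x ^ 2 / (5 - 4 * Real.sin x ^ 2))
      + Real.log (5 / (8 * Real.sin x ^ 4 - 8 * Real.sin x ^ 2 + 5)) / 2 := by
    field_simp
  rw [e1, Real.exp_add, ← Real.log_sqrt h5Qp.le, Real.exp_log (Real.sqrt_pos.2 h5Qp)]
end
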